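/- arXiv:1511.00496 — 4 statements merged into one kernel-verified Lean document; each statement's English description precedes it below -/
import Mathlib

section
/- Let n ≥ 2 and let P = [2] × K_{n−1}, where K_{n−1} = [n−1] ⊕ ([1] ⊔ [1]) ⊕ [n−1]. Then the reverse operator 𝔛 acting on the lower sets of P has exactly n+2 orbits, each orbit has exactly 2n+1 elements, and each orbit contains exactly one lower set of cardinality 2n. -/
/-- The reverse operator `𝔛` on lower sets of a poset: the lower set generated by
the minimal elements of the complement. -/
def XRev {α : Type*} [PartialOrder α] (I : Set α) : Set α :=
  {x | ∃ y, Minimal (fun z => z ∈ Iᶜ) y ∧ x ≤ y}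

/-- The `𝔛`-orbit of a lower set `I` of a finite poset (forward iteration; since
`𝔛` is a bijection on lower sets of a finite poset, this is the full orbit). -/
def XOrbit {α : Type*} [PartialOrder α] (I : Set α) : Set (Set α) :=
  {J | ∃ k : ℕ, XRev^[k] I = J}

/-- The lower set of `[2] × P` corresponding to a pair `(I₁, I₂)` of lower sets
of `P` with `I₂ ⊆ I₁`: coordinate `0` (the bottom of the chain `[2]`) carries
`I₁` and coordinate `1` carries `I₂`. -/
def pairSet {β : Type*} (I₁ I₂ : Set β) : Set (Fin 2 × β) :=
  {p | if p.1 = 0 then p.2 ∈ I₁ else p.2 ∈ I₂}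

/-- The poset `K_{n-1} = [n-1] ⊕ ([1] ⊔ [1]) ⊕ [n-1]`, realized as pairs
`(rank, tag)` with `1 ≤ rank ≤ 2n-1`, where only rank `n` carries two elements
(tags `false` for `n` and `true` for `n′`). -/
def KType (n : ℕ) : Type :=
  {p : ℕ × Bool // 1 ≤ p.1 ∧ p.1 ≤ 2 * n - 1 ∧ (p.1 ≠ n → p.2 = false)}

/-- In `K_{n-1}`, `x ≤ y` iff `x = y` or `x` has strictly smaller rank. -/
instance (n : ℕ) : PartialOrder (KType n) where
  le x y := x = y ∨ x.1.1 < y.1.1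
  le_refl x := Or.inl rfl
  le_trans x y z hxy hyz := by
    rcases hxy with rfl | h
    · exact hyz
    · rcases hyz with rfl | h'
      · exact Or.inr h
      · exact Or.inr (h.trans h')
  le_antisymm x y hxy hyx := by
    rcases hxy with rfl | h
    · rfl
    · rcases hyx with rfl | h'
      · rfl
      · omega

/-- The rank-level lower set `L_j` of `K_{n-1}`. -/
def KL (n : ℕ) (j : ℕ) : Set (KType n) := {x | x.1.1 ≤ j}

/-- The lower set `I_n = {1, …, n-1, n}` of `K_{n-1}`. -/
def KIn (n : ℕ) : Set (KType n) := {x | x.1.1 < n ∨ x.1 = (n, false)}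

/-- The lower set `I_{n′} = {1, …, n-1, n′}` of `K_{n-1}`. -/
def KIn' (n : ℕ) : Set (KType n) := {x | x.1.1 < n ∨ x.1 = (n, true)}

namespace Stmt10Aux

/-- The lower sets `I_n` (t = false) and `I_{n'}` (t = true), uniformly. -/
def KN (n : ℕ) (t : Bool) : Set (KType n) := {x | x.1.1 < n ∨ x.1 = (n, t)}

lemma KIn_eq (n : ℕ) : KIn n = KN n false := rfl
lemma KIn'_eq (n : ℕ) : KIn' n = KN n true := rfl

variable {n : ℕ}

lemma Kle_iff {x y : KType n} : x ≤ y ↔ x = y ∨ x.1.1 < y.1.1 := Iff.rfl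

lemma Kle_rank {x y : KType n} (h : x ≤ y) : x.1.1 ≤ y.1.1 := by
  rcases h with rfl | h <;> omega

lemma Keq_iff {x y : KType n} : x = y ↔ x.1 = y.1 := Subtype.ext_iff

/-- element constructor -/
def mkK (n r : ℕ) (t : Bool) (h1 : 1 ≤ r) (h2 : r ≤ 2*n-1) (h3 : r ≠ n → t = false) :
    KType n := ⟨(r, t), h1, h2, h3⟩

lemma rank_pos (x : KType n) : 1 ≤ x.1.1 := x.2.1
lemma rank_le (x : KType n) : x.1.1 ≤ 2*n-1 := x.2.2.1
lemma tag_eq (x : KType n) : x.1.1 ≠ n → x.1.2 = false := x.2.2.2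

lemma minimal_iff {S : Set (KType n)} {y : KType n} :
    Minimal (fun z => z ∈ S) y ↔ y ∈ S ∧ ∀ z ∈ S, y.1.1 ≤ z.1.1 := by
  constructor
  · rintro ⟨hy, hmin⟩
    refine ⟨hy, fun z hz => ?_⟩
    by_contra hlt
    have hzy : z ≤ y := Or.inr (by omega)
    have := hmin hz hzy
    rcases this with rfl | h <;> omega
  · rintro ⟨hy, hmin⟩
    refine ⟨hy, fun z hz hzy => ?_⟩
    rcases hzy with rfl | h
    · exact le_refl _
    · exact absurd (hmin z hz) (by omega)

lemma minimal_KL_compl (hn : 1 ≤ n) {j : ℕ} (hj : j ≤ 2*n-2) {y : KType n} :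
    Minimal (fun z => z ∈ (KL n j)ᶜ) y ↔ y.1.1 = j + 1 := by
  have hw : (⟨(j+1, false), by omega, by omega, fun _ => rfl⟩ : KType n) ∈ (KL n j)ᶜ := by
    intro h
    have : j + 1 ≤ j := h
    omega
  rw [minimal_iff]
  constructor
  · rintro ⟨hy, hmin⟩
    have h1 : ¬ y.1.1 ≤ j := hy
    have h2 : y.1.1 ≤ j + 1 := hmin _ hw
    omega
  · intro hy
    refine ⟨fun h => ?_, fun z hz => ?_⟩
    · have : y.1.1 ≤ j := h; omega
    · have : ¬ z.1.1 ≤ j := hz; omega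

lemma minimal_KL_top {y : KType n} :
    ¬ Minimal (fun z => z ∈ (KL n (2*n-1))ᶜ) y := by
  intro h
  have hy : ¬ y.1.1 ≤ 2*n-1 := h.1
  exact hy (rank_le y)

lemma mem_KN_iff {t : Bool} {x : KType n} : x ∈ KN n t ↔ x.1.1 < n ∨ x.1 = (n, t) := Iff.rfl

lemma minimal_KN_compl (hn : 1 ≤ n) {t : Bool} {y : KType n} :
    Minimal (fun z => z ∈ (KN n t)ᶜ) y ↔ y.1 = (n, !t) := by
  have hw : (⟨(n, !t), by omega, by omega, fun h => absurd rfl h⟩ : KType n) ∈ (KN n t)ᶜ := by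
    intro h
    rcases h with h | h
    · have : n < n := h
      omega
    · have h2 : ((n : ℕ), !t) = (n, t) := h
      have := congrArg Prod.snd h2
      cases t <;> simp_all
  rw [minimal_iff]
  constructor
  · rintro ⟨hy, hmin⟩
    have hy' : ¬ (y.1.1 < n ∨ y.1 = (n, t)) := hy
    push_neg at hy'
    have h2 : y.1.1 ≤ n := hmin _ hw
    have hr : y.1.1 = n := by omega
    have ht : y.1.2 ≠ t := fun h => hy'.2 (Prod.ext_iff.mpr ⟨hr, h⟩)
    have ht2 : y.1.2 = !t := by cases t <;> cases hyt : y.1.2 <;> simp_all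
    exact Prod.ext_iff.mpr ⟨hr, ht2⟩
  · intro hy
    have hr : y.1.1 = n := congrArg Prod.fst hy
    have ht : y.1.2 = !t := congrArg Prod.snd hy
    refine ⟨fun h => ?_, fun z hz => ?_⟩
    · rcases h with h | h
      · omega
      · rw [Prod.ext_iff] at h
        have := h.2; rw [ht] at this; cases t <;> simp_all
    · have hz' : ¬ (z.1.1 < n ∨ z.1 = (n, t)) := hz
      push_neg at hz'
      omega

lemma isLowerSet_KL {j : ℕ} : IsLowerSet (KL n j) := by
  intro a b hba ha
  have := Kle_rank hba
  simp only [KL, Set.mem_setOf_eq] at *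
  omega

lemma isLowerSet_KN {t : Bool} : IsLowerSet (KN n t) := by
  intro a b hba ha
  simp only [KN, Set.mem_setOf_eq] at *
  rcases hba with rfl | h
  · exact ha
  · rcases ha with h' | h'
    · omega
    · rw [Prod.ext_iff] at h'; left; omega

lemma KL_subset_KL {j j' : ℕ} (h : j ≤ j') : KL n j ⊆ KL n j' := by
  intro x hx; simp only [KL, Set.mem_setOf_eq] at *; omega

lemma KL_subset_KN {j : ℕ} {t : Bool} (h : j < n) : KL n j ⊆ KN n t := by
  intro x hx; simp only [KL, KN, Set.mem_setOf_eq] at *; left; omega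

lemma KN_subset_KL {j : ℕ} {t : Bool} (h : n ≤ j) : KN n t ⊆ KL n j := by
  intro x hx
  simp only [KL, KN, Set.mem_setOf_eq] at *
  rcases hx with h' | h'
  · omega
  · rw [Prod.ext_iff] at h'; omega

end Stmt10Aux

namespace Stmt10Aux

variable {β : Type*} [PartialOrder β]

lemma fin2_cases (c : Fin 2) : c = 0 ∨ c = 1 := by omega

lemma mem_pairSet_zero {A B : Set β} {x : β} : ((0 : Fin 2), x) ∈ pairSet A B ↔ x ∈ A := by
  simp [pairSet]

lemma mem_pairSet_one {A B : Set β} {x : β} : ((1 : Fin 2), x) ∈ pairSet A B ↔ x ∈ B := by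
  simp [pairSet]

lemma pairSet_inj {A B A' B' : Set β} (h : pairSet A B = pairSet A' B') :
    A = A' ∧ B = B' := by
  constructor
  · ext x
    constructor
    · intro hx
      exact mem_pairSet_zero.mp (h ▸ mem_pairSet_zero.mpr hx)
    · intro hx
      exact mem_pairSet_zero.mp (h ▸ mem_pairSet_zero.mpr hx : ((0 : Fin 2), x) ∈ pairSet A B)
  · ext x
    constructor
    · intro hx
      exact mem_pairSet_one.mp (h ▸ mem_pairSet_one.mpr hx)
    · intro hx
      exact mem_pairSet_one.mp (h ▸ mem_pairSet_one.mpr hx : ((1 : Fin 2), x) ∈ pairSet A B)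

lemma isLowerSet_pairSet {A B : Set β} (hA : IsLowerSet A) (hB : IsLowerSet B)
    (hBA : B ⊆ A) : IsLowerSet (pairSet A B) := by
  rintro ⟨c, x⟩ ⟨d, y⟩ hle hmem
  obtain ⟨hcd, hyx⟩ := Prod.mk_le_mk.mp hle
  rcases fin2_cases c with rfl | rfl <;> rcases fin2_cases d with rfl | rfl
  · exact mem_pairSet_zero.mpr (hA hyx (mem_pairSet_zero.mp hmem))
  · exact absurd hcd (by omega)
  · exact mem_pairSet_zero.mpr (hA hyx (hBA (mem_pairSet_one.mp hmem)))
  · exact mem_pairSet_one.mpr (hB hyx (mem_pairSet_one.mp hmem))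

lemma lower_eq_pairSet {I : Set (Fin 2 × β)} (hI : IsLowerSet I) :
    ∃ A B : Set β, IsLowerSet A ∧ IsLowerSet B ∧ B ⊆ A ∧ I = pairSet A B := by
  refine ⟨{x | ((0 : Fin 2), x) ∈ I}, {x | ((1 : Fin 2), x) ∈ I}, ?_, ?_, ?_, ?_⟩
  · intro a b hba ha
    exact hI (Prod.mk_le_mk.mpr ⟨le_refl _, hba⟩) ha
  · intro a b hba ha
    exact hI (Prod.mk_le_mk.mpr ⟨le_refl _, hba⟩) ha
  · intro x hx
    exact hI (Prod.mk_le_mk.mpr ⟨by omega, le_refl x⟩) hx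
  · ext ⟨c, x⟩
    rcases fin2_cases c with rfl | rfl
    · rw [mem_pairSet_zero]; rfl
    · rw [mem_pairSet_one]; rfl

lemma minimal_pairSet_zero {A B : Set β} (hBA : B ⊆ A) {y : β} :
    Minimal (fun z => z ∈ (pairSet A B)ᶜ) ((0 : Fin 2), y) ↔ Minimal (fun z => z ∈ Aᶜ) y := by
  constructor
  · rintro ⟨hy, hmin⟩
    refine ⟨fun h => hy (mem_pairSet_zero.mpr h), fun z hz hzy => ?_⟩
    have := hmin (y := ((0 : Fin 2), z))
      (fun h => hz (mem_pairSet_zero.mp h)) (Prod.mk_le_mk.mpr ⟨le_refl _, hzy⟩)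
    exact (Prod.mk_le_mk.mp this).2
  · rintro ⟨hy, hmin⟩
    refine ⟨fun h => hy (mem_pairSet_zero.mp h), ?_⟩
    rintro ⟨c, z⟩ hz hzy
    obtain ⟨hc, hzy'⟩ := Prod.mk_le_mk.mp hzy
    rcases fin2_cases c with rfl | rfl
    · exact Prod.mk_le_mk.mpr ⟨le_refl _, hmin (fun h => hz (mem_pairSet_zero.mpr h)) hzy'⟩
    · exact absurd hc (by omega)

lemma minimal_pairSet_one {A B : Set β} (hA : IsLowerSet A) (hBA : B ⊆ A) {y : β} :
    Minimal (fun z => z ∈ (pairSet A B)ᶜ) ((1 : Fin 2), y) ↔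
      Minimal (fun z => z ∈ Bᶜ) y ∧ y ∈ A := by
  constructor
  · rintro ⟨hy, hmin⟩
    have hyA : y ∈ A := by
      by_contra hyA
      have := hmin (y := ((0 : Fin 2), y))
        (fun h => hyA (mem_pairSet_zero.mp h)) (Prod.mk_le_mk.mpr ⟨by omega, le_refl _⟩)
      have := (Prod.mk_le_mk.mp this).1
      omega
    refine ⟨⟨fun h => hy (mem_pairSet_one.mpr h), fun z hz hzy => ?_⟩, hyA⟩
    have := hmin (y := ((1 : Fin 2), z))
      (fun h => hz (mem_pairSet_one.mp h)) (Prod.mk_le_mk.mpr ⟨le_refl _, hzy⟩)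
    exact (Prod.mk_le_mk.mp this).2
  · rintro ⟨⟨hy, hmin⟩, hyA⟩
    refine ⟨fun h => hy (mem_pairSet_one.mp h), ?_⟩
    rintro ⟨c, z⟩ hz hzy
    obtain ⟨hc, hzy'⟩ := Prod.mk_le_mk.mp hzy
    rcases fin2_cases c with rfl | rfl
    · exact absurd (hA hzy' hyA) (fun h => hz (mem_pairSet_zero.mpr h))
    · exact Prod.mk_le_mk.mpr ⟨le_refl _, hmin (fun h => hz (mem_pairSet_one.mpr h)) hzy'⟩

/-- The key structural computation: `XRev` on a lower set of `[2] × β`. -/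
lemma xrev_pairSet {A B : Set β} (hA : IsLowerSet A) (hBA : B ⊆ A) :
    XRev (pairSet A B) =
      pairSet
        {z | ∃ y, (Minimal (fun w => w ∈ Aᶜ) y ∨ (Minimal (fun w => w ∈ Bᶜ) y ∧ y ∈ A)) ∧ z ≤ y}
        {z | ∃ y, (Minimal (fun w => w ∈ Bᶜ) y ∧ y ∈ A) ∧ z ≤ y} := by
  ext ⟨c, x⟩
  rcases fin2_cases c with rfl | rfl
  · rw [mem_pairSet_zero]
    constructor
    · rintro ⟨⟨d, y⟩, hmin, hle⟩
      obtain ⟨hc, hxy⟩ := Prod.mk_le_mk.mp hle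
      rcases fin2_cases d with rfl | rfl
      · exact ⟨y, Or.inl ((minimal_pairSet_zero hBA).mp hmin), hxy⟩
      · exact ⟨y, Or.inr ((minimal_pairSet_one hA hBA).mp hmin), hxy⟩
    · rintro ⟨y, hy | hy, hxy⟩
      · exact ⟨((0 : Fin 2), y), (minimal_pairSet_zero hBA).mpr hy,
          Prod.mk_le_mk.mpr ⟨le_refl _, hxy⟩⟩
      · exact ⟨((1 : Fin 2), y), (minimal_pairSet_one hA hBA).mpr hy,
          Prod.mk_le_mk.mpr ⟨by omega, hxy⟩⟩
  · rw [mem_pairSet_one]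
    constructor
    · rintro ⟨⟨d, y⟩, hmin, hle⟩
      obtain ⟨hc, hxy⟩ := Prod.mk_le_mk.mp hle
      rcases fin2_cases d with rfl | rfl
      · exact absurd hc (by omega)
      · exact ⟨y, (minimal_pairSet_one hA hBA).mp hmin, hxy⟩
    · rintro ⟨y, hy, hxy⟩
      exact ⟨((1 : Fin 2), y), (minimal_pairSet_one hA hBA).mpr hy,
        Prod.mk_le_mk.mpr ⟨le_refl _, hxy⟩⟩

end Stmt10Aux

namespace Stmt10Aux

variable {n : ℕ}

lemma exists_le_rank {z : KType n} {r : ℕ} (hr1 : 1 ≤ r) (hr2 : r ≤ 2*n-1)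
    (hz : z.1.1 ≤ r) : ∃ y : KType n, y.1.1 = r ∧ z ≤ y := by
  by_cases h : z.1.1 = r
  · exact ⟨z, h, le_refl z⟩
  · exact ⟨⟨(r, false), hr1, hr2, fun _ => rfl⟩, rfl, Or.inr (show z.1.1 < r by omega)⟩

lemma exists_le_pair {z : KType n} {t : Bool} (hn : 1 ≤ n) (hz : z ∈ KN n t) :
    ∃ y : KType n, y.1 = (n, t) ∧ z ≤ y := by
  rcases hz with h | h
  · exact ⟨⟨(n, t), by omega, by omega, fun hh => absurd rfl hh⟩, rfl, Or.inr h⟩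
  · exact ⟨z, h, le_refl z⟩

lemma mem_KN_of_le {z y : KType n} {t : Bool} (hy : y.1 = (n, t)) (hzy : z ≤ y) :
    z ∈ KN n t := by
  rcases hzy with rfl | h
  · exact Or.inr hy
  · have hr : y.1.1 = n := congrArg Prod.fst hy
    left; omega

lemma rank_of_pair {y : KType n} {t : Bool} (hy : y.1 = (n, t)) : y.1.1 = n :=
  congrArg Prod.fst hy

lemma stepC1 (hn : 2 ≤ n) {a b : ℕ} (hb : b < a) (ha : a ≤ 2*n-2) :
    XRev (pairSet (KL n a) (KL n b)) = pairSet (KL n (a+1)) (KL n (b+1)) := by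
  have hn1 : 1 ≤ n := by omega
  rw [xrev_pairSet isLowerSet_KL (KL_subset_KL (by omega : b ≤ a))]
  have e2 : {z : KType n | ∃ y, (Minimal (fun w => w ∈ (KL n b)ᶜ) y ∧ y ∈ KL n a) ∧ z ≤ y}
      = KL n (b+1) := by
    ext z
    simp only [Set.mem_setOf_eq, minimal_KL_compl hn1 (by omega : b ≤ 2*n-2)]
    constructor
    · rintro ⟨y, ⟨hy, _⟩, hzy⟩
      have := Kle_rank hzy
      show z.1.1 ≤ b+1
      omega
    · intro hz
      obtain ⟨y, hy, hzy⟩ := exists_le_rank (n := n) (by omega) (by omega) (hz : z.1.1 ≤ b+1)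
      exact ⟨y, ⟨hy, show y.1.1 ≤ a by omega⟩, hzy⟩
  have e1 : {z : KType n | ∃ y, (Minimal (fun w => w ∈ (KL n a)ᶜ) y ∨
      (Minimal (fun w => w ∈ (KL n b)ᶜ) y ∧ y ∈ KL n a)) ∧ z ≤ y} = KL n (a+1) := by
    ext z
    simp only [Set.mem_setOf_eq, minimal_KL_compl hn1 (by omega : a ≤ 2*n-2),
      minimal_KL_compl hn1 (by omega : b ≤ 2*n-2)]
    constructor
    · rintro ⟨y, hy, hzy⟩
      have hr := Kle_rank hzy
      show z.1.1 ≤ a + 1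
      rcases hy with hy | ⟨hy, hya⟩
      · omega
      · have : y.1.1 ≤ a := hya
        omega
    · intro hz
      obtain ⟨y, hy, hzy⟩ := exists_le_rank (n := n) (by omega) (by omega) (hz : z.1.1 ≤ a+1)
      exact ⟨y, Or.inl hy, hzy⟩
  rw [e1, e2]

lemma stepC2 (hn : 2 ≤ n) {a : ℕ} (ha : a ≤ 2*n-2) :
    XRev (pairSet (KL n a) (KL n a)) = pairSet (KL n (a+1)) (KL n 0) := by
  have hn1 : 1 ≤ n := by omega
  rw [xrev_pairSet isLowerSet_KL (subset_refl _)]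
  have e2 : {z : KType n | ∃ y, (Minimal (fun w => w ∈ (KL n a)ᶜ) y ∧ y ∈ KL n a) ∧ z ≤ y}
      = KL n 0 := by
    ext z
    simp only [Set.mem_setOf_eq, minimal_KL_compl hn1 (by omega : a ≤ 2*n-2)]
    constructor
    · rintro ⟨y, ⟨hy, hya⟩, hzy⟩
      have : y.1.1 ≤ a := hya
      omega
    · intro hz
      have h1 : z.1.1 ≤ 0 := hz
      have := rank_pos z
      omega
  have e1 : {z : KType n | ∃ y, (Minimal (fun w => w ∈ (KL n a)ᶜ) y ∨
      (Minimal (fun w => w ∈ (KL n a)ᶜ) y ∧ y ∈ KL n a)) ∧ z ≤ y} = KL n (a+1) := by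
    ext z
    simp only [Set.mem_setOf_eq, minimal_KL_compl hn1 (by omega : a ≤ 2*n-2)]
    constructor
    · rintro ⟨y, hy, hzy⟩
      have hr := Kle_rank hzy
      show z.1.1 ≤ a + 1
      rcases hy with hy | ⟨hy, _⟩ <;> omega
    · intro hz
      obtain ⟨y, hy, hzy⟩ := exists_le_rank (n := n) (by omega) (by omega) (hz : z.1.1 ≤ a+1)
      exact ⟨y, Or.inl hy, hzy⟩
  rw [e1, e2]

lemma stepC3 (hn : 2 ≤ n) {b : ℕ} (hb : b ≤ 2*n-2) :
    XRev (pairSet (KL n (2*n-1)) (KL n b)) = pairSet (KL n (b+1)) (KL n (b+1)) := by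
  have hn1 : 1 ≤ n := by omega
  rw [xrev_pairSet isLowerSet_KL (KL_subset_KL (by omega : b ≤ 2*n-1))]
  have e2 : {z : KType n | ∃ y, (Minimal (fun w => w ∈ (KL n b)ᶜ) y ∧ y ∈ KL n (2*n-1)) ∧ z ≤ y}
      = KL n (b+1) := by
    ext z
    simp only [Set.mem_setOf_eq, minimal_KL_compl hn1 (by omega : b ≤ 2*n-2)]
    constructor
    · rintro ⟨y, ⟨hy, _⟩, hzy⟩
      have := Kle_rank hzy
      show z.1.1 ≤ b+1
      omega
    · intro hz
      obtain ⟨y, hy, hzy⟩ := exists_le_rank (n := n) (by omega) (by omega) (hz : z.1.1 ≤ b+1)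
      exact ⟨y, ⟨hy, rank_le y⟩, hzy⟩
  have e1 : {z : KType n | ∃ y, (Minimal (fun w => w ∈ (KL n (2*n-1))ᶜ) y ∨
      (Minimal (fun w => w ∈ (KL n b)ᶜ) y ∧ y ∈ KL n (2*n-1))) ∧ z ≤ y} = KL n (b+1) := by
    ext z
    simp only [Set.mem_setOf_eq, minimal_KL_compl hn1 (by omega : b ≤ 2*n-2)]
    constructor
    · rintro ⟨y, hy, hzy⟩
      have hr := Kle_rank hzy
      show z.1.1 ≤ b + 1
      rcases hy with hy | ⟨hy, _⟩
      · exact absurd hy minimal_KL_top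
      · omega
    · intro hz
      obtain ⟨y, hy, hzy⟩ := exists_le_rank (n := n) (by omega) (by omega) (hz : z.1.1 ≤ b+1)
      exact ⟨y, Or.inr ⟨hy, rank_le y⟩, hzy⟩
  rw [e1, e2]

lemma stepC4 (hn : 2 ≤ n) :
    XRev (pairSet (KL n (2*n-1)) (KL n (2*n-1))) = pairSet (KL n 0) (KL n 0) := by
  rw [xrev_pairSet isLowerSet_KL (subset_refl _)]
  have e : ∀ S : Set (KType n), ({z : KType n | ∃ y, (Minimal (fun w => w ∈ (KL n (2*n-1))ᶜ) y ∧ y ∈ S) ∧ z ≤ y}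
      = KL n 0) := by
    intro S
    ext z
    simp only [Set.mem_setOf_eq]
    constructor
    · rintro ⟨y, ⟨hy, _⟩, _⟩
      exact absurd hy minimal_KL_top
    · intro hz
      have h1 : z.1.1 ≤ 0 := hz
      have := rank_pos z
      omega
  have e1 : {z : KType n | ∃ y, (Minimal (fun w => w ∈ (KL n (2*n-1))ᶜ) y ∨
      (Minimal (fun w => w ∈ (KL n (2*n-1))ᶜ) y ∧ y ∈ KL n (2*n-1))) ∧ z ≤ y} = KL n 0 := by
    ext z
    simp only [Set.mem_setOf_eq]
    constructor
    · rintro ⟨y, hy, hzy⟩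
      rcases hy with hy | ⟨hy, _⟩ <;> exact absurd hy minimal_KL_top
    · intro hz
      have h1 : z.1.1 ≤ 0 := hz
      have := rank_pos z
      omega
  rw [e1, e]

lemma stepD1 (hn : 2 ≤ n) {t : Bool} {b : ℕ} (hb : b + 2 ≤ n) :
    XRev (pairSet (KN n t) (KL n b)) = pairSet (KN n (!t)) (KL n (b+1)) := by
  have hn1 : 1 ≤ n := by omega
  rw [xrev_pairSet isLowerSet_KN (KL_subset_KN (by omega : b < n))]
  have e2 : {z : KType n | ∃ y, (Minimal (fun w => w ∈ (KL n b)ᶜ) y ∧ y ∈ KN n t) ∧ z ≤ y}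
      = KL n (b+1) := by
    ext z
    simp only [Set.mem_setOf_eq, minimal_KL_compl hn1 (by omega : b ≤ 2*n-2)]
    constructor
    · rintro ⟨y, ⟨hy, _⟩, hzy⟩
      have := Kle_rank hzy
      show z.1.1 ≤ b+1
      omega
    · intro hz
      obtain ⟨y, hy, hzy⟩ := exists_le_rank (n := n) (by omega) (by omega) (hz : z.1.1 ≤ b+1)
      exact ⟨y, ⟨hy, Or.inl (by omega)⟩, hzy⟩
  have e1 : {z : KType n | ∃ y, (Minimal (fun w => w ∈ (KN n t)ᶜ) y ∨
      (Minimal (fun w => w ∈ (KL n b)ᶜ) y ∧ y ∈ KN n t)) ∧ z ≤ y} = KN n (!t) := by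
    ext z
    simp only [Set.mem_setOf_eq, minimal_KN_compl hn1,
      minimal_KL_compl hn1 (by omega : b ≤ 2*n-2)]
    constructor
    · rintro ⟨y, hy, hzy⟩
      rcases hy with hy | ⟨hy, _⟩
      · exact mem_KN_of_le hy hzy
      · have := Kle_rank hzy
        exact Or.inl (by omega)
    · intro hz
      obtain ⟨y, hy, hzy⟩ := exists_le_pair hn1 hz
      exact ⟨y, Or.inl hy, hzy⟩
  rw [e1, e2]

lemma stepD2 (hn : 2 ≤ n) {t : Bool} :
    XRev (pairSet (KN n t) (KL n (n-1))) = pairSet (KL n n) (KN n t) := by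
  have hn1 : 1 ≤ n := by omega
  rw [xrev_pairSet isLowerSet_KN (KL_subset_KN (by omega : n-1 < n))]
  have e2 : {z : KType n | ∃ y, (Minimal (fun w => w ∈ (KL n (n-1))ᶜ) y ∧ y ∈ KN n t) ∧ z ≤ y}
      = KN n t := by
    ext z
    simp only [Set.mem_setOf_eq, minimal_KL_compl hn1 (by omega : n-1 ≤ 2*n-2)]
    constructor
    · rintro ⟨y, ⟨hy, hyt⟩, hzy⟩
      rcases hyt with hyt | hyt
      · omega
      · exact mem_KN_of_le hyt hzy
    · intro hz
      obtain ⟨y, hy, hzy⟩ := exists_le_pair hn1 hz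
      exact ⟨y, ⟨by have := rank_of_pair hy; omega, Or.inr hy⟩, hzy⟩
  have e1 : {z : KType n | ∃ y, (Minimal (fun w => w ∈ (KN n t)ᶜ) y ∨
      (Minimal (fun w => w ∈ (KL n (n-1))ᶜ) y ∧ y ∈ KN n t)) ∧ z ≤ y} = KL n n := by
    ext z
    simp only [Set.mem_setOf_eq, minimal_KN_compl hn1,
      minimal_KL_compl hn1 (by omega : n-1 ≤ 2*n-2)]
    constructor
    · rintro ⟨y, hy, hzy⟩
      have hr := Kle_rank hzy
      show z.1.1 ≤ n
      rcases hy with hy | ⟨hy, _⟩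
      · have := rank_of_pair hy; omega
      · omega
    · intro hz
      have hz' : z.1.1 ≤ n := hz
      by_cases hr : z.1.1 = n
      · by_cases htag : z.1.2 = t
        · refine ⟨z, Or.inr ⟨by omega, Or.inr ?_⟩, le_refl z⟩
          exact Prod.ext_iff.mpr ⟨hr, htag⟩
        · refine ⟨z, Or.inl ?_, le_refl z⟩
          have : z.1.2 = !t := by cases t <;> cases hzz : z.1.2 <;> simp_all
          exact Prod.ext_iff.mpr ⟨hr, this⟩
      · refine ⟨⟨(n, !t), by omega, by omega, fun hh => absurd rfl hh⟩, Or.inl rfl,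
          Or.inr (show z.1.1 < n by omega)⟩
  rw [e1, e2]

lemma stepD3 (hn : 2 ≤ n) {t : Bool} {a : ℕ} (ha1 : n ≤ a) (ha2 : a ≤ 2*n-2) :
    XRev (pairSet (KL n a) (KN n t)) = pairSet (KL n (a+1)) (KN n (!t)) := by
  have hn1 : 1 ≤ n := by omega
  rw [xrev_pairSet isLowerSet_KL (KN_subset_KL ha1)]
  have e2 : {z : KType n | ∃ y, (Minimal (fun w => w ∈ (KN n t)ᶜ) y ∧ y ∈ KL n a) ∧ z ≤ y}
      = KN n (!t) := by
    ext z
    simp only [Set.mem_setOf_eq, minimal_KN_compl hn1]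
    constructor
    · rintro ⟨y, ⟨hy, _⟩, hzy⟩
      exact mem_KN_of_le hy hzy
    · intro hz
      obtain ⟨y, hy, hzy⟩ := exists_le_pair hn1 hz
      exact ⟨y, ⟨hy, show y.1.1 ≤ a by have := rank_of_pair hy; omega⟩, hzy⟩
  have e1 : {z : KType n | ∃ y, (Minimal (fun w => w ∈ (KL n a)ᶜ) y ∨
      (Minimal (fun w => w ∈ (KN n t)ᶜ) y ∧ y ∈ KL n a)) ∧ z ≤ y} = KL n (a+1) := by
    ext z
    simp only [Set.mem_setOf_eq, minimal_KN_compl hn1,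
      minimal_KL_compl hn1 (by omega : a ≤ 2*n-2)]
    constructor
    · rintro ⟨y, hy, hzy⟩
      have hr := Kle_rank hzy
      show z.1.1 ≤ a + 1
      rcases hy with hy | ⟨hy, _⟩
      · omega
      · have := rank_of_pair hy; omega
    · intro hz
      obtain ⟨y, hy, hzy⟩ := exists_le_rank (n := n) (by omega) (by omega) (hz : z.1.1 ≤ a+1)
      exact ⟨y, Or.inl hy, hzy⟩
  rw [e1, e2]

lemma stepD4 (hn : 2 ≤ n) {t : Bool} :
    XRev (pairSet (KL n (2*n-1)) (KN n t)) = pairSet (KN n (!t)) (KN n (!t)) := by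
  have hn1 : 1 ≤ n := by omega
  rw [xrev_pairSet isLowerSet_KL (KN_subset_KL (by omega : n ≤ 2*n-1))]
  have e2 : {z : KType n | ∃ y, (Minimal (fun w => w ∈ (KN n t)ᶜ) y ∧ y ∈ KL n (2*n-1)) ∧ z ≤ y}
      = KN n (!t) := by
    ext z
    simp only [Set.mem_setOf_eq, minimal_KN_compl hn1]
    constructor
    · rintro ⟨y, ⟨hy, _⟩, hzy⟩
      exact mem_KN_of_le hy hzy
    · intro hz
      obtain ⟨y, hy, hzy⟩ := exists_le_pair hn1 hz
      exact ⟨y, ⟨hy, rank_le y⟩, hzy⟩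
  have e1 : {z : KType n | ∃ y, (Minimal (fun w => w ∈ (KL n (2*n-1))ᶜ) y ∨
      (Minimal (fun w => w ∈ (KN n t)ᶜ) y ∧ y ∈ KL n (2*n-1))) ∧ z ≤ y} = KN n (!t) := by
    ext z
    simp only [Set.mem_setOf_eq, minimal_KN_compl hn1]
    constructor
    · rintro ⟨y, hy, hzy⟩
      rcases hy with hy | ⟨hy, _⟩
      · exact absurd hy minimal_KL_top
      · exact mem_KN_of_le hy hzy
    · intro hz
      obtain ⟨y, hy, hzy⟩ := exists_le_pair hn1 hz
      exact ⟨y, Or.inr ⟨hy, rank_le y⟩, hzy⟩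
  rw [e1, e2]

lemma stepD5 (hn : 2 ≤ n) {t : Bool} :
    XRev (pairSet (KN n t) (KN n t)) = pairSet (KN n (!t)) (KL n 0) := by
  have hn1 : 1 ≤ n := by omega
  rw [xrev_pairSet isLowerSet_KN (subset_refl _)]
  have key : ∀ y : KType n, y.1 = (n, !t) → y ∉ KN n t := by
    intro y hy hmem
    rcases hmem with h | h
    · have := rank_of_pair hy; omega
    · rw [hy] at h
      have := congrArg Prod.snd h
      cases t <;> simp_all
  have e2 : {z : KType n | ∃ y, (Minimal (fun w => w ∈ (KN n t)ᶜ) y ∧ y ∈ KN n t) ∧ z ≤ y}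
      = KL n 0 := by
    ext z
    simp only [Set.mem_setOf_eq, minimal_KN_compl hn1]
    constructor
    · rintro ⟨y, ⟨hy, hyt⟩, _⟩
      exact absurd hyt (key y hy)
    · intro hz
      have h1 : z.1.1 ≤ 0 := hz
      have := rank_pos z
      omega
  have e1 : {z : KType n | ∃ y, (Minimal (fun w => w ∈ (KN n t)ᶜ) y ∨
      (Minimal (fun w => w ∈ (KN n t)ᶜ) y ∧ y ∈ KN n t)) ∧ z ≤ y} = KN n (!t) := by
    ext z
    simp only [Set.mem_setOf_eq, minimal_KN_compl hn1]
    constructor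
    · rintro ⟨y, hy, hzy⟩
      rcases hy with hy | ⟨hy, hyt⟩
      · exact mem_KN_of_le hy hzy
      · exact absurd hyt (key y hy)
    · intro hz
      obtain ⟨y, hy, hzy⟩ := exists_le_pair hn1 hz
      exact ⟨y, Or.inl hy, hzy⟩
  rw [e1, e2]

end Stmt10Aux

namespace Stmt10Aux

/-- first-coordinate index of the `i`-th chain orbit at time `k` -/
def av (n i k : ℕ) : ℕ := if k = 0 then i else if k ≤ 2*n-1-i then i+k else k-1
/-- second-coordinate index of the `i`-th chain orbit at time `k` -/
def bv (n i k : ℕ) : ℕ := if k = 0 then i else if k ≤ 2*n-i then k-1 else k+i-(2*n+1)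
/-- alternating boolean -/
def nbb (c k : ℕ) : Bool := decide ((c+k) % 2 = 1)

lemma nbb_succ (c k : ℕ) : nbb c (k+1) = !nbb c k := by
  simp only [nbb, ← decide_not]
  exact decide_eq_decide.mpr (by omega)

lemma nbb_congr (c : ℕ) {k k' : ℕ} (h : k % 2 = k' % 2) : nbb c k = nbb c k' :=
  decide_eq_decide.mpr (by omega)

/-- first component of the `i`-th orbit at time `k` -/
def OA (n i k : ℕ) : Set (KType n) :=
  if i < n then KL n (av n i k)
  else if k < n then KN n (nbb (i-n) k)
  else if k < 2*n then KL n k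
  else KN n (nbb (i-n) 1)

/-- second component of the `i`-th orbit at time `k` -/
def OB (n i k : ℕ) : Set (KType n) :=
  if i < n then KL n (bv n i k)
  else if k < n then KL n k
  else if k < 2*n then KN n (nbb (i-n) (k+1))
  else KN n (nbb (i-n) 1)

/-- the `i`-th orbit at time `k`, as a lower set of `[2] × K_{n-1}` -/
def OP (n i k : ℕ) : Set (Fin 2 × KType n) := pairSet (OA n i k) (OB n i k)

variable {n : ℕ}

theorem OP_step (hn : 2 ≤ n) {i k : ℕ} (hk : k ≤ 2*n) :
    XRev (OP n i k) = OP n i (if k = 2*n then 0 else k + 1) := by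
  by_cases hc : i < n
  · -- chain orbits
    rcases eq_or_ne k (2*n) with rfl | h2n
    · rw [if_pos rfl]
      by_cases hi0 : i = 0
      · subst hi0
        have e1 : av n 0 (2*n) = 2*n-1 := by
          simp only [av]; split_ifs <;> first | contradiction | omega
        have e2 : bv n 0 (2*n) = 2*n-1 := by
          simp only [bv]; split_ifs <;> first | contradiction | omega
        have e3 : av n 0 0 = 0 := by
          simp only [av]; split_ifs <;> first | contradiction | omega
        have e4 : bv n 0 0 = 0 := by
          simp only [bv]; split_ifs <;> first | contradiction | omega
        simp only [OP, OA, OB, if_pos hc, e1, e2, e3, e4]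
        exact stepC4 hn
      · have e1 : av n i (2*n) = 2*n-1 := by
          simp only [av]; split_ifs <;> first | contradiction | omega
        have e2 : bv n i (2*n) = i-1 := by
          simp only [bv]; split_ifs <;> first | contradiction | omega
        have e3 : av n i 0 = i-1+1 := by
          simp only [av]; split_ifs <;> first | contradiction | omega
        have e4 : bv n i 0 = i-1+1 := by
          simp only [bv]; split_ifs <;> first | contradiction | omega
        simp only [OP, OA, OB, if_pos hc, e1, e2, e3, e4]
        exact stepC3 hn (by omega)
    · rw [if_neg h2n]
      rcases eq_or_ne k 0 with rfl | hk0
      · have e1 : av n i 0 = i := by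
          simp only [av]; split_ifs <;> first | contradiction | omega
        have e2 : bv n i 0 = i := by
          simp only [bv]; split_ifs <;> first | contradiction | omega
        have e3 : av n i 1 = i+1 := by
          simp only [av]; split_ifs <;> first | contradiction | omega
        have e4 : bv n i 1 = 0 := by
          simp only [bv]; split_ifs <;> first | contradiction | omega
        simp only [OP, OA, OB, if_pos hc, e1, e2, e3, e4]
        exact stepC2 hn (by omega)
      · by_cases h1 : k ≤ 2*n-2-i
        · have e1 : av n i k = i+k := by
            simp only [av]; split_ifs <;> first | contradiction | omega
          have e2 : bv n i k = k-1 := by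
            simp only [bv]; split_ifs <;> first | contradiction | omega
          have e3 : av n i (k+1) = i+k+1 := by
            simp only [av]; split_ifs <;> first | contradiction | omega
          have e4 : bv n i (k+1) = k-1+1 := by
            simp only [bv]; split_ifs <;> first | contradiction | omega
          simp only [OP, OA, OB, if_pos hc, e1, e2, e3, e4]
          exact stepC1 hn (by omega) (by omega)
        · by_cases h2 : k = 2*n-1-i
          · have e1 : av n i k = 2*n-1 := by
              simp only [av]; split_ifs <;> first | contradiction | omega
            have e2 : bv n i k = k-1 := by
              simp only [bv]; split_ifs <;> first | contradiction | omega
            have e3 : av n i (k+1) = k-1+1 := by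
              simp only [av]; split_ifs <;> first | contradiction | omega
            have e4 : bv n i (k+1) = k-1+1 := by
              simp only [bv]; split_ifs <;> first | contradiction | omega
            simp only [OP, OA, OB, if_pos hc, e1, e2, e3, e4]
            exact stepC3 hn (by omega)
          · by_cases h3 : k = 2*n-i
            · have e1 : av n i k = 2*n-1-i := by
                simp only [av]; split_ifs <;> first | contradiction | omega
              have e2 : bv n i k = 2*n-1-i := by
                simp only [bv]; split_ifs <;> first | contradiction | omega
              have e3 : av n i (k+1) = 2*n-1-i+1 := by
                simp only [av]; split_ifs <;> first | contradiction | omega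
              have e4 : bv n i (k+1) = 0 := by
                simp only [bv]; split_ifs <;> first | contradiction | omega
              simp only [OP, OA, OB, if_pos hc, e1, e2, e3, e4]
              exact stepC2 hn (by omega)
            · -- 2*n-i+1 ≤ k ≤ 2*n-1
              have e1 : av n i k = k-1 := by
                simp only [av]; split_ifs <;> first | contradiction | omega
              have e2 : bv n i k = k+i-(2*n+1) := by
                simp only [bv]; split_ifs <;> first | contradiction | omega
              have e3 : av n i (k+1) = k-1+1 := by
                simp only [av]; split_ifs <;> first | contradiction | omega
              have e4 : bv n i (k+1) = k+i-(2*n+1)+1 := by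
                simp only [bv]; split_ifs <;> first | contradiction | omega
              simp only [OP, OA, OB, if_pos hc, e1, e2, e3, e4]
              exact stepC1 hn (by omega) (by omega)
  · -- the two N orbits
    rcases eq_or_ne k (2*n) with rfl | h2n
    · rw [if_pos rfl]
      simp only [OP, OA, OB, if_neg hc, if_neg (show ¬ 2*n < n by omega),
        if_neg (show ¬ 2*n < 2*n by omega), if_pos (show 0 < n by omega),
        if_pos (show 0 < 2*n by omega)]
      rw [show nbb (i-n) 0 = !nbb (i-n) 1 by rw [nbb_succ]; simp]
      exact stepD5 hn
    · rw [if_neg h2n]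
      by_cases h1 : k + 2 ≤ n
      · simp only [OP, OA, OB, if_neg hc, if_pos (show k < n by omega),
          if_pos (show k+1 < n by omega), nbb_succ]
        exact stepD1 hn h1
      · by_cases h2 : k = n-1
        · subst h2
          simp only [OP, OA, OB, if_neg hc, if_pos (show n-1 < n by omega),
            if_neg (show ¬ n-1+1 < n by omega), if_pos (show n-1+1 < 2*n by omega)]
          rw [show nbb (i-n) (n-1+1+1) = nbb (i-n) (n-1) from nbb_congr _ (by omega),
            show (n-1+1 : ℕ) = n by omega]
          exact stepD2 hn
        · by_cases h3 : k ≤ 2*n-2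
          · simp only [OP, OA, OB, if_neg hc, if_neg (show ¬ k < n by omega),
              if_pos (show k < 2*n by omega), if_neg (show ¬ k+1 < n by omega),
              if_pos (show k+1 < 2*n by omega),
              show nbb (i-n) (k+1+1) = !nbb (i-n) (k+1) from nbb_succ _ _]
            exact stepD3 hn (by omega) h3
          · -- k = 2*n-1
            have hk' : k = 2*n-1 := by omega
            subst hk'
            simp only [OP, OA, OB, if_neg hc, if_neg (show ¬ 2*n-1 < n by omega),
              if_pos (show 2*n-1 < 2*n by omega), if_neg (show ¬ 2*n-1+1 < n by omega),
              if_neg (show ¬ 2*n-1+1 < 2*n by omega)]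
            rw [show nbb (i-n) (2*n-1+1) = nbb (i-n) 0 from nbb_congr _ (by omega),
              show nbb (i-n) 1 = !nbb (i-n) 0 from nbb_succ _ 0]
            exact stepD4 hn

end Stmt10Aux

namespace Stmt10Aux

variable {n : ℕ}

lemma OP_iter (hn : 2 ≤ n) {i r : ℕ} (hr : r ≤ 2*n) (m : ℕ) :
    XRev^[m] (OP n i r) = OP n i ((r + m) % (2*n+1)) := by
  induction m with
  | zero => simp [Nat.mod_eq_of_lt (show r < 2*n+1 by omega)]
  | succ m ih =>
    rw [Function.iterate_succ_apply', ih]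
    have hmlt : (r + m) % (2*n+1) < 2*n+1 := Nat.mod_lt _ (by omega)
    have hmlt : (r + m) % (2*n+1) < 2*n+1 := Nat.mod_lt _ (by omega)
    have key : (r + (m+1)) % (2*n+1) = ((r+m) % (2*n+1) + 1) % (2*n+1) := by
      rw [← Nat.add_assoc, Nat.add_mod (r+m) 1, Nat.mod_eq_of_lt (show 1 < 2*n+1 by omega)]
    have hidx : (if (r+m) % (2*n+1) = 2*n then 0 else (r+m) % (2*n+1) + 1)
        = (r + (m+1)) % (2*n+1) := by
      rw [key]
      split_ifs with h
      · rw [h]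
        exact (Nat.mod_self _).symm
      · exact (Nat.mod_eq_of_lt (show (r+m) % (2*n+1) + 1 < 2*n+1 by omega)).symm
    rw [OP_step hn (k := (r + m) % (2*n+1)) (Nat.le_of_lt_succ hmlt), hidx]

lemma XOrbit_OP (hn : 2 ≤ n) {i r : ℕ} (hr : r ≤ 2*n) :
    XOrbit (OP n i r) = OP n i '' {s | s ≤ 2*n} := by
  ext J
  constructor
  · rintro ⟨m, rfl⟩
    rw [OP_iter hn hr m]
    have : (r + m) % (2*n+1) < 2*n+1 := Nat.mod_lt _ (by omega)
    exact ⟨(r + m) % (2*n+1), show (r + m) % (2*n+1) ≤ 2*n by omega, rfl⟩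
  · rintro ⟨s, hs, rfl⟩
    have hs' : s ≤ 2*n := hs
    refine ⟨s + (2*n+1) - r, ?_⟩
    rw [OP_iter hn hr]
    refine congrArg (OP n i) ?_
    have h1 : r + (s + (2*n+1) - r) = s + (2*n+1) := by omega
    rw [h1, Nat.add_mod_right]
    exact Nat.mod_eq_of_lt (show s < 2*n+1 by omega)

lemma mem_XOrbit_self {α : Type*} [PartialOrder α] (I : Set α) : I ∈ XOrbit I :=
  ⟨0, rfl⟩

instance : Finite (KType n) := by
  apply Finite.of_injective
    (fun x : KType n => ((⟨x.1.1, by have := rank_le x; omega⟩ : Fin (2*n+1)), x.1.2))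
  intro x y h
  rw [Prod.ext_iff] at h
  obtain ⟨h1, h2⟩ := h
  have h1' : x.1.1 = y.1.1 := congrArg Fin.val h1
  exact Keq_iff.mpr (Prod.ext_iff.mpr ⟨h1', h2⟩)

lemma ncard_pairSet {A B : Set (KType n)} :
    (pairSet A B).ncard = A.ncard + B.ncard := by
  have inj0 : Function.Injective (fun x : KType n => ((0 : Fin 2), x)) := by
    intro a b h; exact congrArg Prod.snd h
  have inj1 : Function.Injective (fun x : KType n => ((1 : Fin 2), x)) := by
    intro a b h; exact congrArg Prod.snd h
  have hrep : pairSet A B =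
      (fun x => ((0 : Fin 2), x)) '' A ∪ (fun x => ((1 : Fin 2), x)) '' B := by
    ext ⟨c, x⟩
    rcases fin2_cases c with rfl | rfl
    · rw [mem_pairSet_zero]
      constructor
      · intro hx; exact Or.inl ⟨x, hx, rfl⟩
      · rintro (⟨y, hy, he⟩ | ⟨y, hy, he⟩)
        · obtain ⟨-, h2⟩ := Prod.mk.injEq .. ▸ he
          exact h2 ▸ hy
        · exfalso
          have := congrArg Prod.fst he
          simp at this
    · rw [mem_pairSet_one]
      constructor
      · intro hx; exact Or.inr ⟨x, hx, rfl⟩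
      · rintro (⟨y, hy, he⟩ | ⟨y, hy, he⟩)
        · exfalso
          have := congrArg Prod.fst he
          simp at this
        · obtain ⟨-, h2⟩ := Prod.mk.injEq .. ▸ he
          exact h2 ▸ hy
  rw [hrep, Set.ncard_union_eq ?dis (Set.toFinite _) (Set.toFinite _),
    Set.ncard_image_of_injective _ inj0, Set.ncard_image_of_injective _ inj1]
  case dis =>
    rw [Set.disjoint_left]
    rintro ⟨c, x⟩ ⟨y, hy, he⟩ ⟨y', hy', he'⟩
    have h1 := congrArg Prod.fst he
    have h2 := congrArg Prod.fst he'
    simp at h1 h2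
    rw [← h1] at h2
    exact absurd h2 (by simp)

lemma ncard_KL (hn : 1 ≤ n) {j : ℕ} (hj : j ≤ 2*n-1) :
    (KL n j).ncard = if j < n then j else j + 1 := by
  split_ifs with h
  · apply Set.ncard_eq_of_bijective
      (fun i _ => (⟨(i+1, false), by omega, by omega, fun _ => rfl⟩ : KType n))
    · intro a ha
      have h1 : a.1.1 ≤ j := ha
      have h2 := rank_pos a
      have h3 : a.1.2 = false := tag_eq a (by omega)
      refine ⟨a.1.1 - 1, by omega, ?_⟩
      apply Keq_iff.mpr
      apply Prod.ext_iff.mpr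
      exact ⟨show a.1.1 - 1 + 1 = a.1.1 by omega, h3.symm⟩
    · intro i hi
      show i + 1 ≤ j
      omega
    · intro i j' hi hj' he
      have : i + 1 = j' + 1 := congrArg (fun x : KType n => x.1.1) he
      omega
  · apply Set.ncard_eq_of_bijective
      (fun i _ => if hh : i < j then (⟨(i+1, false), by omega, by omega, fun _ => rfl⟩ : KType n)
        else (⟨(n, true), by omega, by omega, fun hc => absurd rfl hc⟩ : KType n))
    · intro a ha
      have h1 : a.1.1 ≤ j := ha
      have h2 := rank_pos a
      by_cases h3 : a.1.2 = true
      · have h4 : a.1.1 = n := by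
          by_contra hne
          exact absurd (tag_eq a hne) (by simp [h3])
        refine ⟨j, by omega, ?_⟩
        rw [dif_neg (by omega)]
        exact (Keq_iff.mpr (Prod.ext_iff.mpr ⟨h4, h3⟩)).symm
      · have h3' : a.1.2 = false := by simp at h3; exact h3
        refine ⟨a.1.1 - 1, by omega, ?_⟩
        rw [dif_pos (by omega)]
        exact Keq_iff.mpr (Prod.ext_iff.mpr ⟨show a.1.1 - 1 + 1 = a.1.1 by omega, h3'.symm⟩)
    · intro i hi
      by_cases hh : i < j
      · rw [dif_pos hh]
        show i + 1 ≤ j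
        omega
      · rw [dif_neg hh]
        show n ≤ j
        omega
    · intro i j' hi hj' he
      by_cases h1 : i < j <;> by_cases h2 : j' < j
      · rw [dif_pos h1, dif_pos h2] at he
        have : i + 1 = j' + 1 := congrArg (fun x : KType n => x.1.1) he
        omega
      · rw [dif_pos h1, dif_neg h2] at he
        have := congrArg (fun x : KType n => x.1.2) he
        simp at this
      · rw [dif_neg h1, dif_pos h2] at he
        have := congrArg (fun x : KType n => x.1.2) he
        simp at this
      · omega

lemma ncard_KN (hn : 1 ≤ n) {t : Bool} : (KN n t).ncard = n := by
  apply Set.ncard_eq_of_bijective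
    (fun i _ => if hh : i + 1 < n then (⟨(i+1, false), by omega, by omega, fun _ => rfl⟩ : KType n)
      else (⟨(n, t), by omega, by omega, fun hc => absurd rfl hc⟩ : KType n))
  · intro a ha
    rcases ha with h | h
    · have h2 := rank_pos a
      have h3 : a.1.2 = false := tag_eq a (by omega)
      refine ⟨a.1.1 - 1, by omega, ?_⟩
      rw [dif_pos (by omega)]
      exact Keq_iff.mpr (Prod.ext_iff.mpr ⟨show a.1.1 - 1 + 1 = a.1.1 by omega, h3.symm⟩)
    · refine ⟨n - 1, by omega, ?_⟩
      rw [dif_neg (by omega)]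
      exact (Keq_iff.mpr h).symm
  · intro i hi
    by_cases hh : i + 1 < n
    · rw [dif_pos hh]
      exact Or.inl hh
    · rw [dif_neg hh]
      exact Or.inr rfl
  · intro i j' hi hj' he
    by_cases h1 : i + 1 < n <;> by_cases h2 : j' + 1 < n
    · rw [dif_pos h1, dif_pos h2] at he
      have : i + 1 = j' + 1 := congrArg (fun x : KType n => x.1.1) he
      omega
    · rw [dif_pos h1, dif_neg h2] at he
      have : i + 1 = n := congrArg (fun x : KType n => x.1.1) he
      omega
    · rw [dif_neg h1, dif_pos h2] at he
      have : n = j' + 1 := congrArg (fun x : KType n => x.1.1) he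
      omega
    · omega

end Stmt10Aux

namespace Stmt10Aux

variable {n : ℕ}

/-- the element `n` (tag `t`) of `K_{n-1}` -/
def mkN (n : ℕ) (hn : 1 ≤ n) (t : Bool) : KType n :=
  ⟨(n, t), by omega, by omega, fun hc => absurd rfl hc⟩

lemma mkN_rank (hn : 1 ≤ n) (t : Bool) : (mkN n hn t).1.1 = n := rfl
lemma mkN_mem_KN (hn : 1 ≤ n) (t : Bool) : mkN n hn t ∈ KN n t := Or.inr rfl

/-- classification of lower sets of `K_{n-1}` -/
lemma K_classify (hn : 1 ≤ n) {I : Set (KType n)} (hI : IsLowerSet I) :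
    (∃ j, j ≤ 2*n-1 ∧ I = KL n j) ∨ (∃ t, I = KN n t) := by
  classical
  by_cases hft : (mkN n hn false ∈ I ↔ mkN n hn true ∈ I)
  · -- both or neither: a rank-level set
    rcases Set.eq_empty_or_nonempty I with rfl | ⟨x0, hx0⟩
    · left
      refine ⟨0, by omega, ?_⟩
      ext x
      constructor
      · intro hx; exact absurd hx (Set.notMem_empty x)
      · intro hx
        have h1 : x.1.1 ≤ 0 := hx
        have := rank_pos x
        omega
    · set P : ℕ → Prop := fun r => ∃ x ∈ I, x.1.1 = r with hP
      set j := Nat.findGreatest P (2*n-1) with hjdef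
      have hx0P : P x0.1.1 := ⟨x0, hx0, rfl⟩
      have hj1 : x0.1.1 ≤ j := Nat.le_findGreatest (rank_le x0) hx0P
      have hj0 : 1 ≤ j := le_trans (rank_pos x0) hj1
      have hspec : P j := Nat.findGreatest_spec (rank_le x0) hx0P
      obtain ⟨w, hwI, hwj⟩ := hspec
      have hmax : ∀ x ∈ I, x.1.1 ≤ j := by
        intro x hx
        by_contra hgt
        have hPx : P x.1.1 := ⟨x, hx, rfl⟩
        exact Nat.findGreatest_is_greatest (show j < x.1.1 by omega) (rank_le x) hPx
      left
      refine ⟨j, Nat.findGreatest_le _, ?_⟩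
      ext y
      constructor
      · intro hy
        exact (hmax y hy : y.1.1 ≤ j)
      · intro hy
        have hy' : y.1.1 ≤ j := hy
        rcases eq_or_lt_of_le hy' with heq | hlt
        · by_cases hyw : y = w
          · exact hyw ▸ hwI
          · -- same rank j, different elements : j = n and both tags present
            have hrr : y.1.1 = w.1.1 := by omega
            have htag : y.1.2 ≠ w.1.2 := by
              intro he
              exact hyw (Keq_iff.mpr (Prod.ext_iff.mpr ⟨hrr, he⟩))
            have hjn : j = n := by
              by_contra hne
              have h1 : y.1.2 = false := tag_eq y (by omega)
              have h2 : w.1.2 = false := tag_eq w (by omega)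
              rw [h1, h2] at htag
              exact htag rfl
            -- w is mkN _ _ w.1.2 and y is mkN _ _ y.1.2
            have hw' : w = mkN n hn w.1.2 :=
              Keq_iff.mpr (Prod.ext_iff.mpr ⟨show w.1.1 = n by omega, rfl⟩)
            have hy2 : y = mkN n hn y.1.2 :=
              Keq_iff.mpr (Prod.ext_iff.mpr ⟨show y.1.1 = n by omega, rfl⟩)
            have hboth : mkN n hn false ∈ I ∧ mkN n hn true ∈ I := by
              rcases Bool.eq_false_or_eq_true w.1.2 with h | h
              · rw [h] at hw'
                have h1 : mkN n hn true ∈ I := hw' ▸ hwI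
                exact ⟨hft.mpr h1, h1⟩
              · rw [h] at hw'
                have h1 : mkN n hn false ∈ I := hw' ▸ hwI
                exact ⟨h1, hft.mp h1⟩
            rcases Bool.eq_false_or_eq_true y.1.2 with h | h
            · rw [h] at hy2; exact hy2 ▸ hboth.2
            · rw [h] at hy2; exact hy2 ▸ hboth.1
        · exact hI (Or.inr (by omega) : y ≤ w) hwI
  · -- exactly one of the two middle elements
    right
    by_cases hf : mkN n hn false ∈ I
    · have ht : mkN n hn true ∉ I := fun h => hft ⟨fun _ => h, fun _ => hf⟩
      refine ⟨false, ?_⟩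
      ext y
      constructor
      · intro hy
        rcases Nat.lt_or_ge y.1.1 n with hlt | hge
        · exact Or.inl hlt
        · have hrn : y.1.1 = n := by
            by_contra hne
            have : mkN n hn true ≤ y := Or.inr (by rw [mkN_rank]; omega)
            exact ht (hI this hy)
          rcases Bool.eq_false_or_eq_true y.1.2 with h | h
          · exact absurd (show mkN n hn true ∈ I from
              (Keq_iff.mpr (Prod.ext_iff.mpr ⟨hrn, h⟩) : y = mkN n hn true) ▸ hy) ht
          · exact Or.inr (Prod.ext_iff.mpr ⟨hrn, h⟩)
      · intro hy
        rcases hy with h | h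
        · exact hI (Or.inr (by rw [mkN_rank]; omega) : y ≤ mkN n hn false) hf
        · exact (Keq_iff.mpr h : y = mkN n hn false) ▸ hf
    · have ht : mkN n hn true ∈ I := by
        by_contra hmt
        exact hft ⟨fun h => absurd h hf, fun h => absurd h hmt⟩
      refine ⟨true, ?_⟩
      ext y
      constructor
      · intro hy
        rcases Nat.lt_or_ge y.1.1 n with hlt | hge
        · exact Or.inl hlt
        · have hrn : y.1.1 = n := by
            by_contra hne
            have : mkN n hn false ≤ y := Or.inr (by rw [mkN_rank]; omega)
            exact hf (hI this hy)
          rcases Bool.eq_false_or_eq_true y.1.2 with h | h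
          · exact Or.inr (Prod.ext_iff.mpr ⟨hrn, h⟩)
          · exact absurd (show mkN n hn false ∈ I from
              (Keq_iff.mpr (Prod.ext_iff.mpr ⟨hrn, h⟩) : y = mkN n hn false) ▸ hy) hf
      · intro hy
        rcases hy with h | h
        · exact hI (Or.inr (by rw [mkN_rank]; omega) : y ≤ mkN n hn true) ht
        · exact (Keq_iff.mpr h : y = mkN n hn true) ▸ ht

/-- subset relations give numeric constraints -/
lemma sub_KL_KL (hn : 1 ≤ n) {a b : ℕ} (hb : b ≤ 2*n-1) (h : KL n b ⊆ KL n a) : b ≤ a := by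
  rcases Nat.eq_zero_or_pos b with rfl | hb1
  · omega
  · exact (h (show (⟨(b, false), by omega, by omega, fun _ => rfl⟩ : KType n) ∈ KL n b
      from le_refl b) : b ≤ a)

lemma sub_KL_KN (hn : 1 ≤ n) {b : ℕ} {t : Bool} (hb : b ≤ 2*n-1) (h : KL n b ⊆ KN n t) :
    b < n := by
  by_contra hge
  have hm : mkN n hn (!t) ∈ KL n b := show n ≤ b by omega
  rcases h hm with h1 | h1
  · have : n < n := h1
    omega
  · have h2 : (!t) = t := congrArg Prod.snd h1
    cases t <;> simp_all

lemma sub_KN_KL (hn : 1 ≤ n) {a : ℕ} {t : Bool} (h : KN n t ⊆ KL n a) : n ≤ a :=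
  (h (mkN_mem_KN hn t) : n ≤ a)

lemma sub_KN_KN (hn : 1 ≤ n) {t t' : Bool} (h : KN n t ⊆ KN n t') : t = t' := by
  rcases h (mkN_mem_KN hn t) with h1 | h1
  · have : n < n := h1
    omega
  · exact congrArg Prod.snd h1

/-- distinctness of the basic lower sets -/
lemma KL_injective (hn : 1 ≤ n) {j j' : ℕ} (hj : j ≤ 2*n-1) (hj' : j' ≤ 2*n-1)
    (h : KL n j = KL n j') : j = j' :=
  le_antisymm (sub_KL_KL hn hj (le_of_eq h)) (sub_KL_KL hn hj' (le_of_eq h.symm))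

lemma KL_ne_KN (hn : 1 ≤ n) {j : ℕ} {t : Bool} : KL n j ≠ KN n t := by
  intro h
  have h1 : n ≤ j := sub_KN_KL hn (le_of_eq h.symm)
  have h2 : mkN n hn (!t) ∈ KL n j := show n ≤ j from h1
  rw [h] at h2
  rcases h2 with h3 | h3
  · have : n < n := h3
    omega
  · have h4 : (!t) = t := congrArg Prod.snd h3
    cases t <;> simp_all

lemma KN_injective (hn : 1 ≤ n) {t t' : Bool} (h : KN n t = KN n t') : t = t' :=
  sub_KN_KN hn (le_of_eq h)

end Stmt10Aux

namespace Stmt10Aux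

variable {n : ℕ}

lemma isLowerSet_OP (hn : 2 ≤ n) (i k : ℕ) : IsLowerSet (OP n i k) := by
  apply isLowerSet_pairSet
  · simp only [OA]; split_ifs <;> first | exact isLowerSet_KL | exact isLowerSet_KN
  · simp only [OB]; split_ifs <;> first | exact isLowerSet_KL | exact isLowerSet_KN
  · by_cases hc : i < n
    · simp only [OA, OB, if_pos hc]
      exact KL_subset_KL (show bv n i k ≤ av n i k by
        simp only [av, bv]; split_ifs <;> first | contradiction | omega)
    · simp only [OA, OB, if_neg hc]
      split_ifs with h1 h2
      · exact KL_subset_KN h1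
      · exact KN_subset_KL (by omega)
      · exact subset_refl _

/-- position of the unique Lagrangian lower set in the `i`-th orbit -/
def kst (n i : ℕ) : ℕ := if n ≤ i then 2*n else if i % 2 = 0 then n - i/2 else 2*n - (i-1)/2

lemma kst_le (hn : 2 ≤ n) (i : ℕ) : kst n i ≤ 2*n := by
  simp only [kst]; split_ifs <;> omega

lemma ncard_OP_eq_iff (hn : 2 ≤ n) {i k : ℕ} (hi : i < n+2) (hk : k ≤ 2*n) :
    (OP n i k).ncard = 2*n ↔ k = kst n i := by
  have hn1 : 1 ≤ n := by omega
  rw [OP, ncard_pairSet]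
  by_cases hc : i < n
  · have hav : av n i k ≤ 2*n-1 := by
      simp only [av]; split_ifs <;> first | contradiction | omega
    have hbv : bv n i k ≤ 2*n-1 := by
      simp only [bv]; split_ifs <;> first | contradiction | omega
    simp only [OA, OB, if_pos hc]
    rw [ncard_KL hn1 hav, ncard_KL hn1 hbv]
    simp only [av, bv, kst, if_neg (show ¬ n ≤ i by omega)]
    split_ifs <;> omega
  · simp only [OA, OB, if_neg hc, kst, if_pos (show n ≤ i by omega)]
    split_ifs with h1 h2
    · rw [ncard_KN hn1, ncard_KL hn1 (by omega), if_pos h1]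
      omega
    · rw [ncard_KL hn1 (by omega), ncard_KN hn1, if_neg (show ¬ k < n by omega)]
      omega
    · rw [ncard_KN hn1]
      omega

lemma toNat_le (t : Bool) : t.toNat ≤ 1 := by cases t <;> simp

lemma toNat_decide (t : Bool) : decide (t.toNat = 1) = t := by cases t <;> rfl

lemma nbb_mk (x bt : ℕ) : nbb ((x + bt) % 2) x = decide (bt % 2 = 1) := by
  simp only [nbb]
  exact decide_eq_decide.mpr (by omega)

lemma nbb_mk' (x : ℕ) (t : Bool) : nbb ((x + t.toNat) % 2) x = t := by
  rw [nbb_mk]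
  have : t.toNat % 2 = t.toNat := Nat.mod_eq_of_lt (by cases t <;> simp)
  rw [this, toNat_decide]

lemma nbb_inj {c c' m m' : ℕ} (hc : c ≤ 1) (hc' : c' ≤ 1) (h : nbb c m = nbb c' m')
    (hm : m % 2 = m' % 2) : c = c' := by
  simp only [nbb] at h
  have hiff := decide_eq_decide.mp h
  by_cases hp : (c + m) % 2 = 1
  · have := hiff.mp hp; omega
  · have h2 : ¬ (c' + m') % 2 = 1 := fun hq => hp (hiff.mpr hq)
    omega

lemma OP_injective (hn : 2 ≤ n) {i i' k k' : ℕ} (hi : i < n+2) (hi' : i' < n+2)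
    (hk : k ≤ 2*n) (hk' : k' ≤ 2*n) (h : OP n i k = OP n i' k') : i = i' ∧ k = k' := by
  have hn1 : 1 ≤ n := by omega
  obtain ⟨hA, hB⟩ := pairSet_inj h
  by_cases hc : i < n <;> by_cases hc' : i' < n
  · -- chain vs chain
    simp only [OA, if_pos hc, if_pos hc'] at hA
    simp only [OB, if_pos hc, if_pos hc'] at hB
    have b1 : av n i k ≤ 2*n-1 := by
      simp only [av]; split_ifs <;> first | contradiction | omega
    have b2 : av n i' k' ≤ 2*n-1 := by
      simp only [av]; split_ifs <;> first | contradiction | omega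
    have b3 : bv n i k ≤ 2*n-1 := by
      simp only [bv]; split_ifs <;> first | contradiction | omega
    have b4 : bv n i' k' ≤ 2*n-1 := by
      simp only [bv]; split_ifs <;> first | contradiction | omega
    have e1 := KL_injective hn1 b1 b2 hA
    have e2 := KL_injective hn1 b3 b4 hB
    simp only [av] at e1
    simp only [bv] at e2
    split_ifs at e1 e2 <;> omega
  · -- chain vs N : impossible
    exfalso
    simp only [OA, if_pos hc, if_neg hc'] at hA
    simp only [OB, if_pos hc, if_neg hc'] at hB
    by_cases h1 : k' < n
    · rw [if_pos h1] at hA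
      exact KL_ne_KN hn1 hA
    · by_cases h2 : k' < 2*n
      · rw [if_neg h1, if_pos h2] at hB
        exact KL_ne_KN hn1 hB
      · rw [if_neg h1, if_neg h2] at hA
        exact KL_ne_KN hn1 hA
  · -- N vs chain : impossible
    exfalso
    simp only [OA, if_neg hc, if_pos hc'] at hA
    simp only [OB, if_neg hc, if_pos hc'] at hB
    by_cases h1 : k < n
    · rw [if_pos h1] at hA
      exact KL_ne_KN hn1 hA.symm
    · by_cases h2 : k < 2*n
      · rw [if_neg h1, if_pos h2] at hB
        exact KL_ne_KN hn1 hB.symm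
      · rw [if_neg h1, if_neg h2] at hA
        exact KL_ne_KN hn1 hA.symm
  · -- N vs N
    simp only [OA, if_neg hc, if_neg hc'] at hA
    simp only [OB, if_neg hc, if_neg hc'] at hB
    by_cases h1 : k < n <;> by_cases h1' : k' < n
    · rw [if_pos h1, if_pos h1'] at hA
      rw [if_pos h1, if_pos h1'] at hB
      have ekk : k = k' := KL_injective hn1 (by omega) (by omega) hB
      subst ekk
      have et := KN_injective hn1 hA
      have := nbb_inj (by omega) (by omega) et rfl
      exact ⟨by omega, rfl⟩
    · exfalso
      by_cases h2' : k' < 2*n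
      · rw [if_pos h1, if_neg h1', if_pos h2'] at hA
        exact KL_ne_KN hn1 hA.symm
      · rw [if_pos h1, if_neg h1', if_neg h2'] at hB
        exact KL_ne_KN hn1 hB
    · exfalso
      by_cases h2 : k < 2*n
      · rw [if_neg h1, if_pos h1', if_pos h2] at hA
        exact KL_ne_KN hn1 hA
      · rw [if_neg h1, if_pos h1', if_neg h2] at hB
        exact KL_ne_KN hn1 hB.symm
    · by_cases h2 : k < 2*n <;> by_cases h2' : k' < 2*n
      · rw [if_neg h1, if_neg h1', if_pos h2, if_pos h2'] at hA
        rw [if_neg h1, if_neg h1', if_pos h2, if_pos h2'] at hB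
        have ekk : k = k' := KL_injective hn1 (by omega) (by omega) hA
        subst ekk
        have et := KN_injective hn1 hB
        have := nbb_inj (by omega) (by omega) et rfl
        exact ⟨by omega, rfl⟩
      · exfalso
        rw [if_neg h1, if_neg h1', if_pos h2, if_neg h2'] at hA
        exact KL_ne_KN hn1 hA
      · exfalso
        rw [if_neg h1, if_neg h1', if_neg h2, if_pos h2'] at hA
        exact KL_ne_KN hn1 hA.symm
      · rw [if_neg h1, if_neg h1', if_neg h2, if_neg h2'] at hA
        have et := KN_injective hn1 hA
        have := nbb_inj (by omega) (by omega) et rfl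
        exact ⟨by omega, by omega⟩

lemma coverage (hn : 2 ≤ n) {I : Set (Fin 2 × KType n)} (hI : IsLowerSet I) :
    ∃ i, i < n+2 ∧ ∃ k, k ≤ 2*n ∧ I = OP n i k := by
  have hn1 : 1 ≤ n := by omega
  obtain ⟨A, B, hA, hB, hBA, rfl⟩ := lower_eq_pairSet hI
  rcases K_classify hn1 hA with ⟨a, ha, rfl⟩ | ⟨t, rfl⟩ <;>
    rcases K_classify hn1 hB with ⟨b, hb, rfl⟩ | ⟨t', rfl⟩
  · -- (KL a, KL b)
    have hba : b ≤ a := sub_KL_KL hn1 hb hBA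
    by_cases hd : a = b
    · subst hd
      by_cases hbn : a < n
      · refine ⟨a, by omega, 0, by omega, ?_⟩
        have hv1 : av n a 0 = a := by
          simp only [av]; split_ifs <;> first | contradiction | omega
        have hv2 : bv n a 0 = a := by
          simp only [bv]; split_ifs <;> first | contradiction | omega
        simp only [OP, OA, OB, if_pos hbn, hv1, hv2]
      · refine ⟨2*n-1-a, by omega, a+1, by omega, ?_⟩
        have hv1 : av n (2*n-1-a) (a+1) = a := by
          have h1 : a ≤ 2*n-1 := ha
          simp only [av]; split_ifs <;> first | contradiction | omega
        have hv2 : bv n (2*n-1-a) (a+1) = a := by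
          have h1 : a ≤ 2*n-1 := ha
          simp only [bv]; split_ifs <;> first | contradiction | omega
        simp only [OP, OA, OB, if_pos (show 2*n-1-a < n by omega), hv1, hv2]
    · have hlt : b < a := by omega
      by_cases hs : a - b ≤ n
      · refine ⟨a-b-1, by omega, b+1, by omega, ?_⟩
        have hv1 : av n (a-b-1) (b+1) = a := by
          have h1 : a ≤ 2*n-1 := ha
          have h2 : b < a := hlt
          simp only [av]; split_ifs <;> first | contradiction | omega
        have hv2 : bv n (a-b-1) (b+1) = b := by
          have h1 : a ≤ 2*n-1 := ha
          have h2 : b < a := hlt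
          simp only [bv]; split_ifs <;> first | contradiction | omega
        simp only [OP, OA, OB, if_pos (show a-b-1 < n by omega), hv1, hv2]
      · refine ⟨2*n-a+b, by omega, a+1, by omega, ?_⟩
        have hv1 : av n (2*n-a+b) (a+1) = a := by
          have h1 : a ≤ 2*n-1 := ha
          have h2 : b < a := hlt
          have h3 : ¬ a - b ≤ n := hs
          simp only [av]; split_ifs <;> first | contradiction | omega
        have hv2 : bv n (2*n-a+b) (a+1) = b := by
          have h1 : a ≤ 2*n-1 := ha
          have h2 : b < a := hlt
          have h3 : ¬ a - b ≤ n := hs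
          simp only [bv]; split_ifs <;> first | contradiction | omega
        simp only [OP, OA, OB, if_pos (show 2*n-a+b < n by omega), hv1, hv2]
  · -- (KL a, KN t')
    have han : n ≤ a := sub_KN_KL hn1 hBA
    refine ⟨n + (a+1+t'.toNat) % 2, by omega, a, by omega, ?_⟩
    have hin : ¬ n + (a+1+t'.toNat) % 2 < n := by omega
    have hc1 : n + (a+1+t'.toNat) % 2 - n = (a+1+t'.toNat) % 2 := by omega
    have hv : nbb ((a+1+t'.toNat) % 2) (a+1) = t' := nbb_mk' (a+1) t'
    simp only [OP, OA, OB, if_neg hin, if_neg (show ¬ a < n by omega),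
      if_pos (show a < 2*n by omega), hc1, hv]
  · -- (KN t, KL b)
    have hbn : b < n := sub_KL_KN hn1 hb hBA
    refine ⟨n + (b+t.toNat) % 2, by omega, b, by omega, ?_⟩
    have hin : ¬ n + (b+t.toNat) % 2 < n := by omega
    have hc1 : n + (b+t.toNat) % 2 - n = (b+t.toNat) % 2 := by omega
    have hv : nbb ((b+t.toNat) % 2) b = t := nbb_mk' b t
    simp only [OP, OA, OB, if_neg hin, if_pos hbn, hc1, hv]
  · -- (KN t, KN t')
    have htt : t' = t := sub_KN_KN hn1 hBA
    subst htt
    refine ⟨n + (1+t'.toNat) % 2, by omega, 2*n, by omega, ?_⟩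
    have hin : ¬ n + (1+t'.toNat) % 2 < n := by omega
    have hc1 : n + (1+t'.toNat) % 2 - n = (1+t'.toNat) % 2 := by omega
    have hv : nbb ((1+t'.toNat) % 2) 1 = t' := nbb_mk' 1 t'
    simp only [OP, OA, OB, if_neg hin, if_neg (show ¬ 2*n < n by omega),
      if_neg (show ¬ 2*n < 2*n by omega), hc1, hv]

end Stmt10Aux

open Stmt10Aux in
/-- For `P = [2] × K_{n-1}` (Δ(1) for the extra-special grading of `D_{n+2}`),
the reverse operator `𝔛` on the lower sets of `P` has exactly `n+2` orbits,
each orbit has exactly `2n+1` elements, and each orbit contains exactly one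
lower set of cardinality `2n`. -/
theorem stmt10 (n : ℕ) (hn : 2 ≤ n) :
    Set.ncard {O : Set (Set (Fin 2 × KType n)) |
        ∃ I : Set (Fin 2 × KType n), IsLowerSet I ∧ O = XOrbit I} = n + 2 ∧
      ∀ I : Set (Fin 2 × KType n), IsLowerSet I →
        (XOrbit I).ncard = 2 * n + 1 ∧
          (∃! J : Set (Fin 2 × KType n), J ∈ XOrbit I ∧ J.ncard = 2 * n) := by
  constructor
  · -- exactly n + 2 orbits
    have hset : {O : Set (Set (Fin 2 × KType n)) |
        ∃ I : Set (Fin 2 × KType n), IsLowerSet I ∧ O = XOrbit I}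
        = (fun i => OP n i '' {s | s ≤ 2*n}) '' {i | i < n+2} := by
      ext O
      constructor
      · rintro ⟨I, hI, rfl⟩
        obtain ⟨i, hi, k, hk, rfl⟩ := coverage hn hI
        exact ⟨i, hi, (XOrbit_OP hn hk).symm⟩
      · rintro ⟨i, hi, rfl⟩
        exact ⟨OP n i 0, isLowerSet_OP hn i 0, (XOrbit_OP hn (by omega)).symm⟩
    rw [hset]
    have hinj : Set.InjOn (fun i => OP n i '' {s | s ≤ 2*n}) {i | i < n+2} := by
      intro i hi i' hi' he
      have h0 : OP n i 0 ∈ OP n i '' {s | s ≤ 2*n} :=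
        ⟨0, show (0:ℕ) ≤ 2*n by omega, rfl⟩
      have he' : OP n i '' {s | s ≤ 2*n} = OP n i' '' {s | s ≤ 2*n} := he
      rw [he'] at h0
      obtain ⟨s, hs, hOP⟩ := h0
      exact ((OP_injective hn hi' hi hs (by omega) hOP).1).symm
    rw [Set.ncard_image_of_injOn hinj,
      show {i : ℕ | i < n+2} = ↑(Finset.Iio (n+2)) by ext x; simp,
      Set.ncard_coe_finset, Nat.card_Iio]
  · intro I hI
    obtain ⟨i, hi, k, hk, rfl⟩ := coverage hn hI
    have hinj : Set.InjOn (OP n i) {s | s ≤ 2*n} := by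
      intro s hs s' hs' he
      exact (OP_injective hn hi hi hs hs' he).2
    constructor
    · rw [XOrbit_OP hn hk, Set.ncard_image_of_injOn hinj,
        show {s : ℕ | s ≤ 2*n} = ↑(Finset.Iic (2*n)) by ext x; simp,
        Set.ncard_coe_finset, Nat.card_Iic]
    · refine ⟨OP n i (kst n i), ⟨?_, ?_⟩, ?_⟩
      · rw [XOrbit_OP hn hk]
        exact ⟨kst n i, kst_le hn i, rfl⟩
      · exact (ncard_OP_eq_iff hn hi (kst_le hn i)).mpr rfl
      · rintro J ⟨hJmem, hJcard⟩
        rw [XOrbit_OP hn hk] at hJmem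
        obtain ⟨s, hs, rfl⟩ := hJmem
        have hskst : s = kst n i := (ncard_OP_eq_iff hn hi hs).mp hJcard
        rw [hskst]
end

section
/- Let n ≥ 2 and let P = [2] × K_{n−1}; identify lower sets of P with pairs (I_1, I_2) of lower sets of K_{n−1} with I_2 ⊆ I_1, and let L_0, …, L_{2n−1} denote the rank-level lower sets of K_{n−1}. Then for every i with 0 ≤ i ≤ n−1, the orbit of the lower set (L_i, L_i) under the reverse operator 𝔛 of P has exactly 2n+1 elements; moreover 𝔛^{2n+1}(L_i, L_i) = (L_i, L_i). -/
/-! ### Auxiliary lemmas -/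

section aux

variable {n : ℕ}

lemma kle_iff {x y : KType n} : x ≤ y ↔ x = y ∨ x.1.1 < y.1.1 := Iff.rfl

lemma rank_le_of_kle {x y : KType n} (h : x ≤ y) : x.1.1 ≤ y.1.1 := by
  rcases h with rfl | h
  · exact le_rfl
  · exact h.le

lemma kle_of_rank_lt {x y : KType n} (h : x.1.1 < y.1.1) : x ≤ y := Or.inr h

/-- The (unique untagged) element of rank `r`. -/
def kelt (n r : ℕ) (h1 : 1 ≤ r) (h2 : r ≤ 2 * n - 1) : KType n :=
  ⟨(r, false), h1, h2, fun _ => rfl⟩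

@[simp] lemma kelt_rank (n r h1 h2) : (kelt n r h1 h2).1.1 = r := rfl

lemma mem_KL {j : ℕ} {x : KType n} : x ∈ KL n j ↔ x.1.1 ≤ j := Iff.rfl

lemma mem_pairSet {β : Type*} {I₁ I₂ : Set β} {p : Fin 2 × β} :
    p ∈ pairSet I₁ I₂ ↔ if p.1 = 0 then p.2 ∈ I₁ else p.2 ∈ I₂ := Iff.rfl

lemma mem_compl_pairKL {a b : ℕ} {p : Fin 2 × KType n} :
    p ∈ (pairSet (KL n a) (KL n b))ᶜ ↔
      (if p.1 = 0 then a < p.2.1.1 else b < p.2.1.1) := by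
  rw [Set.mem_compl_iff, mem_pairSet]
  split_ifs <;> simp [mem_KL]

lemma fin2_eq_zero_or_one (c : Fin 2) : c = 0 ∨ c = 1 := by omega

lemma mk_le_mk {c d : Fin 2} {x y : KType n} :
    (c, x) ≤ (d, y) ↔ c ≤ d ∧ x ≤ y := Prod.le_def

/-- Minimality of `(0, x)` with `x` of rank `a+1` in the complement of
`pairSet (KL n a) (KL n b)`. -/
lemma min0 {a : ℕ} (b : ℕ) {x : KType n} (hx : x.1.1 = a + 1) :
    Minimal (fun z => z ∈ (pairSet (KL n a) (KL n b))ᶜ) ((0 : Fin 2), x) := by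
  constructor
  · show ((0 : Fin 2), x) ∈ (pairSet (KL n a) (KL n b))ᶜ
    rw [mem_compl_pairKL]
    simp [hx]
  · rintro ⟨c, w⟩ hz hle
    rw [mk_le_mk] at hle
    have hc : c = 0 := Fin.le_zero_iff.mp hle.1
    subst hc
    have hz' : ((0 : Fin 2), w) ∈ (pairSet (KL n a) (KL n b))ᶜ := hz
    rw [mem_compl_pairKL] at hz'
    simp at hz'
    have hz := hz' 
    have hw : w = x := by
      rcases hle.2 with rfl | h
      · rfl
      · omega
    subst hw
    exact le_rfl

/-- Minimality of `(1, x)` with `x` of rank `b+1 ≤ a` in the complement of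
`pairSet (KL n a) (KL n b)`. -/
lemma min1 {a b : ℕ} (hba : b + 1 ≤ a) {x : KType n} (hx : x.1.1 = b + 1) :
    Minimal (fun z => z ∈ (pairSet (KL n a) (KL n b))ᶜ) ((1 : Fin 2), x) := by
  constructor
  · show ((1 : Fin 2), x) ∈ (pairSet (KL n a) (KL n b))ᶜ
    rw [mem_compl_pairKL]
    simp [hx]
  · rintro ⟨c, w⟩ hz hle
    rw [mk_le_mk] at hle
    have hz' : (c, w) ∈ (pairSet (KL n a) (KL n b))ᶜ := hz
    rw [mem_compl_pairKL] at hz'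
    have hz := hz' 
    have hwx : w.1.1 ≤ b + 1 := hx ▸ rank_le_of_kle hle.2
    rcases fin2_eq_zero_or_one c with rfl | rfl
    · simp at hz; omega
    · simp at hz
      have hw : w = x := by
        rcases hle.2 with rfl | h
        · rfl
        · omega
      subst hw
      exact le_rfl

/-- Rank pinning for minimal elements of the form `(0, x)`. -/
lemma min_rank0 {a b : ℕ} (ha : a + 1 ≤ 2 * n - 1) {x : KType n}
    (h : Minimal (fun z => z ∈ (pairSet (KL n a) (KL n b))ᶜ) ((0 : Fin 2), x)) :
    x.1.1 = a + 1 := by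
  have hx : a < x.1.1 := by
    have h1 : ((0 : Fin 2), x) ∈ (pairSet (KL n a) (KL n b))ᶜ := h.1
    rw [mem_compl_pairKL] at h1; simpa using h1
  by_contra hne
  have hlt : a + 1 < x.1.1 := by omega
  have hwc : ((0 : Fin 2), kelt n (a + 1) (by omega) ha) ∈ (pairSet (KL n a) (KL n b))ᶜ := by
    rw [mem_compl_pairKL]; simp
  have hwle : ((0 : Fin 2), kelt n (a + 1) (by omega) ha) ≤ (0, x) :=
    mk_le_mk.mpr ⟨le_rfl, kle_of_rank_lt (by simpa using hlt)⟩
  have := rank_le_of_kle (mk_le_mk.mp (h.2 hwc hwle)).2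
  simp only [kelt_rank] at this; omega

/-- Rank pinning for minimal elements of the form `(1, x)`. -/
lemma min_rank1 {a b : ℕ} (ha : a ≤ 2 * n - 1) {x : KType n}
    (h : Minimal (fun z => z ∈ (pairSet (KL n a) (KL n b))ᶜ) ((1 : Fin 2), x)) :
    x.1.1 = b + 1 ∧ b < a := by
  have hx : b < x.1.1 := by
    have h1 : ((1 : Fin 2), x) ∈ (pairSet (KL n a) (KL n b))ᶜ := h.1
    rw [mem_compl_pairKL] at h1; simpa using h1
  have hxa : x.1.1 ≤ a := by
    by_contra hgt
    have hc : ((0 : Fin 2), x) ∈ (pairSet (KL n a) (KL n b))ᶜ := by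
      rw [mem_compl_pairKL]; simp; omega
    have hle : ((0 : Fin 2), x) ≤ (1, x) := mk_le_mk.mpr ⟨by omega, le_rfl⟩
    have := (mk_le_mk.mp (h.2 hc hle)).1
    omega
  refine ⟨?_, by omega⟩
  by_contra hne
  have hlt : b + 1 < x.1.1 := by omega
  have hwc : ((1 : Fin 2), kelt n (b + 1) (by omega) (by omega)) ∈ (pairSet (KL n a) (KL n b))ᶜ := by
    rw [mem_compl_pairKL]; simp
  have hwle : ((1 : Fin 2), kelt n (b + 1) (by omega) (by omega)) ≤ (1, x) :=
    mk_le_mk.mpr ⟨le_rfl, kle_of_rank_lt (by simpa using hlt)⟩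
  have := rank_le_of_kle (mk_le_mk.mp (h.2 hwc hwle)).2
  simp only [kelt_rank] at this; omega

end aux

/-! ### The four step computations -/

section steps

variable {n : ℕ}

lemma step_offdiag {a b : ℕ} (hb : b < a) (ha : a + 1 ≤ 2 * n - 1) :
    XRev (pairSet (KL n a) (KL n b)) = pairSet (KL n (a + 1)) (KL n (b + 1)) := by
  ext p
  obtain ⟨c, u⟩ := p
  simp only [XRev, Set.mem_setOf_eq, mem_pairSet]
  constructor
  · rintro ⟨⟨d, x⟩, hmin, hle⟩
    rw [mk_le_mk] at hle
    have hru := rank_le_of_kle hle.2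
    rcases fin2_eq_zero_or_one d with rfl | rfl
    · have hc : c = 0 := Fin.le_zero_iff.mp hle.1
      have hx := min_rank0 ha hmin
      simp [hc, mem_KL]
      omega
    · have hx := (min_rank1 (by omega) hmin).1
      rcases fin2_eq_zero_or_one c with rfl | rfl <;> simp [mem_KL] <;> omega
  · intro hu
    rcases fin2_eq_zero_or_one c with rfl | rfl
    · have hu' : u.1.1 ≤ a + 1 := by simpa [mem_KL] using hu
      by_cases hr : u.1.1 = a + 1
      · exact ⟨(0, u), min0 b hr, le_rfl⟩
      · refine ⟨(0, kelt n (a + 1) (by omega) ha), min0 b rfl, ?_⟩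
        exact mk_le_mk.mpr ⟨le_rfl, kle_of_rank_lt (by simp; omega)⟩
    · have hu' : u.1.1 ≤ b + 1 := by simpa [mem_KL] using hu
      by_cases hr : u.1.1 = b + 1
      · exact ⟨(1, u), min1 (by omega) hr, le_rfl⟩
      · refine ⟨(1, kelt n (b + 1) (by omega) (by omega)), min1 (by omega) rfl, ?_⟩
        exact mk_le_mk.mpr ⟨le_rfl, kle_of_rank_lt (by simp; omega)⟩

lemma step_diag {a : ℕ} (ha : a + 1 ≤ 2 * n - 1) :
    XRev (pairSet (KL n a) (KL n a)) = pairSet (KL n (a + 1)) (KL n 0) := by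
  ext p
  obtain ⟨c, u⟩ := p
  simp only [XRev, Set.mem_setOf_eq, mem_pairSet]
  constructor
  · rintro ⟨⟨d, x⟩, hmin, hle⟩
    rw [mk_le_mk] at hle
    have hru := rank_le_of_kle hle.2
    rcases fin2_eq_zero_or_one d with rfl | rfl
    · have hc : c = 0 := Fin.le_zero_iff.mp hle.1
      have hx := min_rank0 ha hmin
      simp [hc, mem_KL]
      omega
    · exact absurd (min_rank1 (by omega) hmin).2 (by omega)
  · intro hu
    rcases fin2_eq_zero_or_one c with rfl | rfl
    · have hu' : u.1.1 ≤ a + 1 := by simpa [mem_KL] using hu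
      by_cases hr : u.1.1 = a + 1
      · exact ⟨(0, u), min0 a hr, le_rfl⟩
      · refine ⟨(0, kelt n (a + 1) (by omega) ha), min0 a rfl, ?_⟩
        exact mk_le_mk.mpr ⟨le_rfl, kle_of_rank_lt (by simp; omega)⟩
    · have hu' : u.1.1 ≤ 0 := by simpa [mem_KL] using hu
      exact absurd hu' (by have := u.2.1; omega)

lemma step_top {b : ℕ} (hn : 1 ≤ n) (hb : b + 1 ≤ 2 * n - 1) :
    XRev (pairSet (KL n (2 * n - 1)) (KL n b)) = pairSet (KL n (b + 1)) (KL n (b + 1)) := by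
  ext p
  obtain ⟨c, u⟩ := p
  simp only [XRev, Set.mem_setOf_eq, mem_pairSet]
  constructor
  · rintro ⟨⟨d, x⟩, hmin, hle⟩
    rw [mk_le_mk] at hle
    have hru := rank_le_of_kle hle.2
    rcases fin2_eq_zero_or_one d with rfl | rfl
    · have h1 : ((0 : Fin 2), x) ∈ (pairSet (KL n (2 * n - 1)) (KL n b))ᶜ := hmin.1
      rw [mem_compl_pairKL] at h1
      simp at h1
      exact absurd h1 (by have := x.2.2.1; omega)
    · have hx := (min_rank1 le_rfl hmin).1
      rcases fin2_eq_zero_or_one c with rfl | rfl <;> simp [mem_KL] <;> omega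
  · intro hu
    have hu' : u.1.1 ≤ b + 1 := by
      rcases fin2_eq_zero_or_one c with rfl | rfl
      · simpa [mem_KL] using hu
      · simpa [mem_KL] using hu
    by_cases hr : u.1.1 = b + 1
    · refine ⟨(1, u), min1 (by omega) hr, ?_⟩
      exact mk_le_mk.mpr ⟨by omega, le_rfl⟩
    · refine ⟨(1, kelt n (b + 1) (by omega) hb), min1 (by omega) rfl, ?_⟩
      exact mk_le_mk.mpr ⟨by omega, kle_of_rank_lt (by simp; omega)⟩

lemma step_full (hn : 1 ≤ n) :
    XRev (pairSet (KL n (2 * n - 1)) (KL n (2 * n - 1))) = pairSet (KL n 0) (KL n 0) := by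
  ext p
  obtain ⟨c, u⟩ := p
  simp only [XRev, Set.mem_setOf_eq, mem_pairSet]
  constructor
  · rintro ⟨⟨d, x⟩, hmin, hle⟩
    have h1 : ((d : Fin 2), x) ∈ (pairSet (KL n (2 * n - 1)) (KL n (2 * n - 1)))ᶜ := hmin.1
    rw [mem_compl_pairKL] at h1
    dsimp only at h1
    have := x.2.2.1
    split_ifs at h1 <;> omega
  · intro hu
    have := u.2.1
    rcases fin2_eq_zero_or_one c with rfl | rfl <;> simp [mem_KL] at hu <;> omega

end steps

/-! ### Orbit formula -/

/-- Explicit formula for the `k`-th iterate of the orbit of `(L_i, L_i)`. -/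
def FOrb (n i k : ℕ) : ℕ × ℕ :=
  if k = 0 then (i, i)
  else if k ≤ 2 * n - 1 - i then (i + k, k - 1)
  else if k = 2 * n - i then (2 * n - 1 - i, 2 * n - 1 - i)
  else (k - 1, k - (2 * n - i) - 1)

lemma FOrb_bound (n i : ℕ) (hn : 2 ≤ n) (hi : i ≤ n - 1) {k : ℕ} (hk : k ≤ 2 * n) :
    (FOrb n i k).1 ≤ 2 * n - 1 ∧ (FOrb n i k).2 ≤ (FOrb n i k).1 := by
  unfold FOrb
  split_ifs <;> dsimp only <;> omega

lemma FOrb_inj (n i : ℕ) (hn : 2 ≤ n) (hi : i ≤ n - 1) {j k : ℕ} (hj : j ≤ 2 * n)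
    (hk : k ≤ 2 * n) (h1 : (FOrb n i j).1 = (FOrb n i k).1)
    (h2 : (FOrb n i j).2 = (FOrb n i k).2) : j = k := by
  unfold FOrb at h1 h2
  split_ifs at h1 h2 <;> dsimp only at h1 h2 <;> omega

lemma iter_formula (n i : ℕ) (hn : 2 ≤ n) (hi : i ≤ n - 1) :
    ∀ k, k ≤ 2 * n → XRev^[k] (pairSet (KL n i) (KL n i))
      = pairSet (KL n (FOrb n i k).1) (KL n (FOrb n i k).2) := by
  intro k
  induction k with
  | zero =>
    intro _
    have h0 : FOrb n i 0 = (i, i) := by simp [FOrb]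
    rw [h0]
    rfl
  | succ k ih =>
    intro hk
    rw [Function.iterate_succ_apply', ih (by omega)]
    rcases (show k = 0 ∨ (1 ≤ k ∧ k < 2 * n - 1 - i) ∨ k = 2 * n - 1 - i ∨ k = 2 * n - i ∨
        (2 * n - i < k ∧ k < 2 * n) by omega) with h0 | hB | hC | hD | hE
    · subst h0
      have e0 : FOrb n i 0 = (i, i) := by simp [FOrb]
      have e1 : FOrb n i 1 = (i + 1, 0) := by
        unfold FOrb; split_ifs <;> rw [Prod.mk.injEq] <;> first | omega | exact False.elim ‹False›
      rw [e0, e1]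
      exact step_diag (by omega)
    · have e0 : FOrb n i k = (i + k, k - 1) := by
        unfold FOrb; split_ifs <;> rw [Prod.mk.injEq] <;> first | omega | exact False.elim ‹False›
      have e1 : FOrb n i (k + 1) = (i + k + 1, k - 1 + 1) := by
        unfold FOrb; split_ifs <;> rw [Prod.mk.injEq] <;> first | omega | exact False.elim ‹False›
      rw [e0, e1]
      exact step_offdiag (by omega) (by omega)
    · have e0 : FOrb n i k = (2 * n - 1, 2 * n - 2 - i) := by
        unfold FOrb; split_ifs <;> rw [Prod.mk.injEq] <;> first | omega | exact False.elim ‹False›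
      have e1 : FOrb n i (k + 1) = (2 * n - 2 - i + 1, 2 * n - 2 - i + 1) := by
        unfold FOrb; split_ifs <;> rw [Prod.mk.injEq] <;> first | omega | exact False.elim ‹False›
      rw [e0, e1]
      exact step_top (by omega) (by omega)
    · have e0 : FOrb n i k = (2 * n - 1 - i, 2 * n - 1 - i) := by
        unfold FOrb; split_ifs <;> rw [Prod.mk.injEq] <;> first | omega | exact False.elim ‹False›
      have e1 : FOrb n i (k + 1) = (2 * n - 1 - i + 1, 0) := by
        unfold FOrb; split_ifs <;> rw [Prod.mk.injEq] <;> first | omega | exact False.elim ‹False›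
      rw [e0, e1]
      exact step_diag (by omega)
    · have e0 : FOrb n i k = (k - 1, k - (2 * n - i) - 1) := by
        unfold FOrb; split_ifs <;> rw [Prod.mk.injEq] <;> first | omega | exact False.elim ‹False›
      have e1 : FOrb n i (k + 1) = (k - 1 + 1, k - (2 * n - i) - 1 + 1) := by
        unfold FOrb; split_ifs <;> rw [Prod.mk.injEq] <;> first | omega | exact False.elim ‹False›
      rw [e0, e1]
      exact step_offdiag (by omega) (by omega)

lemma period (n i : ℕ) (hn : 2 ≤ n) (hi : i ≤ n - 1) :
    XRev^[2 * n + 1] (pairSet (KL n i) (KL n i)) = pairSet (KL n i) (KL n i) := by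
  rw [Function.iterate_succ_apply', iter_formula n i hn hi (2 * n) le_rfl]
  by_cases h0 : i = 0
  · subst h0
    have e0 : FOrb n 0 (2 * n) = (2 * n - 1, 2 * n - 1) := by
      unfold FOrb; split_ifs <;> rw [Prod.mk.injEq] <;> first | omega | exact False.elim ‹False›
    rw [e0]
    exact step_full (by omega)
  · have e0 : FOrb n i (2 * n) = (2 * n - 1, i - 1) := by
      unfold FOrb; split_ifs <;> rw [Prod.mk.injEq] <;> first | omega | exact False.elim ‹False›
    rw [e0]
    have := step_top (n := n) (b := i - 1) (by omega) (by omega)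
    rw [show i - 1 + 1 = i by omega] at this
    exact this

/-! ### Counting the orbit -/

lemma KL_inj (n : ℕ) {a b : ℕ} (ha : a ≤ 2 * n - 1) (hb : b ≤ 2 * n - 1)
    (h : KL n a = KL n b) : a = b := by
  by_contra hne
  rcases Nat.lt_or_ge a b with hab | hab
  · have hx : kelt n b (by omega) hb ∈ KL n b := by simp [mem_KL]
    rw [← h] at hx
    simp [mem_KL] at hx
    omega
  · have hab : b < a := by omega
    have hx : kelt n a (by omega) ha ∈ KL n a := by simp [mem_KL]
    rw [h] at hx
    simp [mem_KL] at hx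
    omega

lemma pairKL_inj (n : ℕ) {a b a' b' : ℕ} (ha : a ≤ 2 * n - 1) (hb : b ≤ 2 * n - 1)
    (ha' : a' ≤ 2 * n - 1) (hb' : b' ≤ 2 * n - 1)
    (h : pairSet (KL n a) (KL n b) = pairSet (KL n a') (KL n b')) : a = a' ∧ b = b' := by
  constructor
  · refine KL_inj n ha ha' (Set.ext fun x => ?_)
    have := Set.ext_iff.mp h (0, x)
    simpa [mem_pairSet] using this
  · refine KL_inj n hb hb' (Set.ext fun x => ?_)
    have := Set.ext_iff.mp h (1, x)
    simpa [mem_pairSet] using this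


/-- For `P = [2] × K_{n-1}` and `0 ≤ i ≤ n-1`, the `𝔛`-orbit of the lower set
`(L_i, L_i)` has exactly `2n+1` elements; moreover
`𝔛^[2n+1] (L_i, L_i) = (L_i, L_i)`. -/
theorem stmt11 (n : ℕ) (hn : 2 ≤ n) (i : ℕ) (hi : i ≤ n - 1) :
    (XOrbit (pairSet (KL n i) (KL n i))).ncard = 2 * n + 1 ∧
      XRev^[2 * n + 1] (pairSet (KL n i) (KL n i)) = pairSet (KL n i) (KL n i) := by
  classical
  have hper := period n i hn hi
  refine ⟨?_, hper⟩
  set X := pairSet (KL n i) (KL n i) with hX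
  have hperiodic : Function.IsPeriodicPt XRev (2 * n + 1) X := hper
  have horb : XOrbit X = ↑((Finset.range (2 * n + 1)).image (fun k => XRev^[k] X)) := by
    ext J
    simp only [XOrbit, Set.mem_setOf_eq, Finset.coe_image, Set.mem_image, Finset.mem_coe,
      Finset.mem_range]
    constructor
    · rintro ⟨k, rfl⟩
      exact ⟨k % (2 * n + 1), Nat.mod_lt _ (by omega), hperiodic.iterate_mod_apply k⟩
    · rintro ⟨k, _, rfl⟩
      exact ⟨k, rfl⟩
  rw [horb, Set.ncard_coe_finset]
  rw [Finset.card_image_of_injOn, Finset.card_range]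
  intro j hj k hk h
  simp only [Finset.coe_range, Set.mem_Iio] at hj hk
  have h' : XRev^[j] (pairSet (KL n i) (KL n i)) = XRev^[k] (pairSet (KL n i) (KL n i)) := h
  rw [iter_formula n i hn hi j (by omega), iter_formula n i hn hi k (by omega)] at h'
  have bj := FOrb_bound n i hn hi (k := j) (by omega)
  have bk := FOrb_bound n i hn hi (k := k) (by omega)
  have := pairKL_inj n (by omega) (by omega) (by omega) (by omega) h'
  exact FOrb_inj n i hn hi (by omega) (by omega) this.1 this.2
end

section
/- Let n ≥ 2 and let P = [2] × K_{n−1}; identify lower sets of P with pairs (I_1, I_2) of lower sets of K_{n−1} with I_2 ⊆ I_1, and set I_n = {1, …, n−1, n} ⊆ K_{n−1}. Then the orbit of the lower set (I_n, I_n) under the reverse operator 𝔛 of P has exactly 2n+1 elements, 𝔛^{2n+1}(I_n, I_n) = (I_n, I_n), and (I_n, I_n) is the unique lower set of cardinality 2n in that orbit. -/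
----------------------------------------------------------------
-- Infrastructure
namespace S12
variable {n : ℕ}

lemma kle_iff (x y : KType n) : x ≤ y ↔ x = y ∨ x.1.1 < y.1.1 := Iff.rfl

lemma klt_iff (x y : KType n) : x < y ↔ x.1.1 < y.1.1 := by
  rw [lt_iff_le_and_ne]
  constructor
  · rintro ⟨h | h, hne⟩
    · exact absurd h hne
    · exact h
  · intro h
    refine ⟨Or.inr h, fun he => ?_⟩
    subst he; omega

lemma kext {x y : KType n} (h : x.1 = y.1) : x = y := Subtype.ext h

lemma krank {x : KType n} : 1 ≤ x.1.1 ∧ x.1.1 ≤ 2*n-1 := ⟨x.2.1, x.2.2.1⟩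

lemma ktag {x : KType n} (h : x.1.1 ≠ n) : x.1.2 = false := x.2.2.2 h

/-- The two middle elements (tag `b`). -/
def mid (n : ℕ) (hn : 1 ≤ n) (b : Bool) : KType n :=
  ⟨(n, b), by refine ⟨hn, by omega, fun h => absurd rfl h⟩⟩

/-- The unique element of rank `r` for `r ≠ n`. -/
def elt (n r : ℕ) (h1 : 1 ≤ r) (h2 : r ≤ 2*n-1) : KType n :=
  ⟨(r, false), ⟨h1, h2, fun _ => rfl⟩⟩

def KI (n : ℕ) (b : Bool) : Set (KType n) := {x | x.1.1 < n ∨ x.1 = (n, b)}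

lemma KIn_eq : KIn n = KI n false := rfl
lemma KIn'_eq : KIn' n = KI n true := rfl

lemma mem_KI {b : Bool} {x : KType n} : x ∈ KI n b ↔ x.1.1 < n ∨ x.1 = (n, b) := Iff.rfl
lemma mem_KL {j : ℕ} {x : KType n} : x ∈ KL n j ↔ x.1.1 ≤ j := Iff.rfl

lemma le_mid {hn : 1 ≤ n} {b : Bool} {x : KType n} : x ≤ mid n hn b ↔ x ∈ KI n b := by
  rw [kle_iff, mem_KI]
  constructor
  · rintro (rfl | h)
    · exact Or.inr rfl
    · exact Or.inl h
  · rintro (h | h)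
    · exact Or.inr h
    · exact Or.inl (kext h)

lemma le_elt {r : ℕ} {h1 : 1 ≤ r} {h2 : r ≤ 2*n-1} (hr : r ≠ n) {x : KType n} :
    x ≤ elt n r h1 h2 ↔ x ∈ KL n r := by
  rw [kle_iff, mem_KL]
  constructor
  · rintro (rfl | h)
    · exact le_refl r
    · exact Nat.le_of_lt h
  · intro h
    rcases Nat.lt_or_ge x.1.1 r with h' | h'
    · exact Or.inr h'
    · have hxr : x.1.1 = r := by omega
      refine Or.inl (kext ?_)
      have ht := ktag (x := x) (by omega)
      rw [Prod.ext_iff]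
      exact ⟨hxr, ht⟩

lemma mem_pairSet {β : Type*} {I1 I2 : Set β} {i : Fin 2} {x : β} :
    (i, x) ∈ pairSet I1 I2 ↔ if i = 0 then x ∈ I1 else x ∈ I2 := Iff.rfl

lemma fin2_cases (i : Fin 2) : i = 0 ∨ i = 1 := by omega

lemma minimal_compl_iff {α : Type*} [PartialOrder α] (S : Set α) (y : α) :
    Minimal (fun z => z ∈ Sᶜ) y ↔ y ∉ S ∧ ∀ z, z < y → z ∈ S := by
  rw [minimal_iff_forall_lt]
  simp only [Set.mem_compl_iff, not_not]

lemma xrev_eq_of_min {α : Type*} [PartialOrder α] (S M : Set α)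
    (h : ∀ y, Minimal (fun z => z ∈ Sᶜ) y ↔ y ∈ M) :
    XRev S = {x | ∃ y ∈ M, x ≤ y} := by
  ext x
  simp only [XRev, Set.mem_setOf_eq]
  constructor
  · rintro ⟨y, hy, hle⟩; exact ⟨y, (h y).1 hy, hle⟩
  · rintro ⟨y, hy, hle⟩; exact ⟨y, (h y).2 hy, hle⟩

@[simp] lemma mid_fst (hn : 1 ≤ n) (b : Bool) : (mid n hn b).1 = (n, b) := rfl
@[simp] lemma elt_fst (r : ℕ) (h1 : 1 ≤ r) (h2 : r ≤ 2*n-1) : (elt n r h1 h2).1 = (r, false) := rfl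

lemma mem_down0 {β : Type*} [PartialOrder β] {a : β} {i : Fin 2} {x : β} :
    ((i,x) ≤ ((0:Fin 2), a)) ↔ i = 0 ∧ x ≤ a := by
  rw [Prod.mk_le_mk]
  constructor
  · rintro ⟨h1, h2⟩; exact ⟨Fin.le_zero_iff.mp h1, h2⟩
  · rintro ⟨rfl, h2⟩; exact ⟨le_refl _, h2⟩

lemma mem_down1 {β : Type*} [PartialOrder β] {a : β} {i : Fin 2} {x : β} :
    ((i,x) ≤ ((1:Fin 2), a)) ↔ x ≤ a := by
  rw [Prod.mk_le_mk]
  constructor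
  · rintro ⟨h1, h2⟩; exact h2
  · intro h2
    refine ⟨?_, h2⟩
    have := i.isLt
    rw [Fin.le_def, Fin.val_one]
    omega

lemma T1 (hn : 2 ≤ n) (b : Bool) :
    XRev (pairSet (KI n b) (KI n b)) = pairSet (KI n (!b)) (KL n 0) := by
  have h1n : (1:ℕ) ≤ n := by omega
  rw [xrev_eq_of_min (M := {((0:Fin 2), mid n h1n (!b))})]
  · ext ⟨i, x⟩
    simp only [Set.mem_setOf_eq, Set.mem_singleton_iff, exists_eq_left, mem_down0, mem_pairSet]
    rcases fin2_cases i with rfl | rfl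
    · rw [if_pos rfl, le_mid]
      exact ⟨fun h => h.2, fun h => ⟨rfl, h⟩⟩
    · rw [if_neg (by decide)]
      constructor
      · rintro ⟨h, -⟩; exact absurd h (by decide)
      · intro h
        exfalso
        have := (krank (x := x)).1
        rw [mem_KL] at h
        omega
  · rintro ⟨i, x⟩
    rw [minimal_compl_iff, Set.mem_singleton_iff]
    constructor
    · rintro ⟨hy, hz⟩
      rcases fin2_cases i with rfl | rfl
      · rw [mem_pairSet, if_pos rfl, mem_KI] at hy
        push_neg at hy
        obtain ⟨hr, ht⟩ := hy
        by_cases hx : x.1.1 = n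
        · have htagne : x.1.2 ≠ b := by
            intro hc
            apply ht
            have h0 : x.1 = (x.1.1, x.1.2) := rfl
            rw [h0, hx, hc]
          have htag : x.1.2 = !b := by
            cases b <;> cases hb : x.1.2 <;> simp_all
          have : x = mid n h1n (!b) := by
            apply kext
            rw [Prod.ext_iff, mid_fst]
            exact ⟨hx, htag⟩
          rw [this]
        · exfalso
          have hlt : ((0:Fin 2), mid n h1n (!b)) < ((0:Fin 2), x) := by
            rw [lt_iff_le_and_ne]
            constructor
            · rw [mem_down0]
              exact ⟨rfl, by rw [kle_iff]; exact Or.inr (show n < x.1.1 by omega)⟩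
            · intro hc
              rw [Prod.mk.injEq] at hc
              have := congrArg (fun z => z.1.1) hc.2
              simp at this
              omega
          have hmem := hz _ hlt
          rw [mem_pairSet, if_pos rfl, mem_KI] at hmem
          rcases hmem with h | h
          · have : (mid n h1n (!b)).1.1 = n := rfl
            omega
          · rw [mid_fst, Prod.mk.injEq] at h
            cases b <;> simp_all
      · exfalso
        rw [mem_pairSet, if_neg (by decide)] at hy
        have hlt : ((0:Fin 2), x) < ((1:Fin 2), x) := by
          rw [lt_iff_le_and_ne]
          constructor
          · rw [mem_down1]
          · intro hc
            rw [Prod.mk.injEq] at hc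
            exact absurd hc.1 (by decide)
        have hmem := hz _ hlt
        rw [mem_pairSet, if_pos rfl] at hmem
        exact hy hmem
    · intro hM
      rw [Prod.mk.injEq] at hM
      obtain ⟨rfl, rfl⟩ := hM
      refine ⟨?_, ?_⟩
      · rw [mem_pairSet, if_pos rfl, mem_KI]
        push_neg
        refine ⟨le_of_eq rfl, ?_⟩
        intro hc
        rw [Prod.mk.injEq] at hc
        cases b <;> simp_all
      · rintro ⟨j, w⟩ hlt
        rw [lt_iff_le_and_ne] at hlt
        obtain ⟨hle, hne⟩ := hlt
        rw [mem_down0] at hle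
        obtain ⟨rfl, hw⟩ := hle
        rw [le_mid, mem_KI] at hw
        rw [mem_pairSet, if_pos rfl, mem_KI]
        rcases hw with h | h
        · exact Or.inl h
        · exfalso
          exact hne (by rw [Prod.mk.injEq]; exact ⟨rfl, kext (by rw [h, mid_fst])⟩)


lemma mem_pair_min {β : Type*} {a c y : β} : y ∈ ({a, c} : Set β) ↔ y = a ∨ y = c := by
  simp [Set.mem_insert_iff]

lemma T2 (hn : 2 ≤ n) (b : Bool) (k : ℕ) (hk1 : 1 ≤ k) (hk2 : k ≤ n - 1) :
    XRev (pairSet (KI n b) (KL n (k-1))) = pairSet (KI n (!b)) (KL n k) := by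
  have h1n : (1:ℕ) ≤ n := by omega
  have hkn : k ≠ n := by omega
  have hk2n : k ≤ 2*n-1 := by omega
  set e := elt n k hk1 hk2n with he
  set ν := mid n h1n (!b) with hν
  rw [xrev_eq_of_min (M := {((0:Fin 2), ν), ((1:Fin 2), e)})]
  · ext ⟨i, x⟩
    simp only [Set.mem_setOf_eq, mem_pair_min, exists_eq_or_imp, exists_eq_left,
      mem_down0, mem_down1, mem_pairSet]
    rcases fin2_cases i with rfl | rfl
    · rw [if_pos rfl, le_mid, le_elt hkn]
      constructor
      · rintro (⟨-, h⟩ | h)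
        · exact h
        · rw [mem_KL] at h
          exact Or.inl (by omega)
      · intro h
        exact Or.inl ⟨rfl, h⟩
    · rw [if_neg (by decide), le_elt hkn]
      constructor
      · rintro (⟨h, -⟩ | h)
        · exact absurd h (by decide)
        · exact h
      · intro h
        exact Or.inr h
  · rintro ⟨i, x⟩
    rw [minimal_compl_iff, mem_pair_min]
    constructor
    · rintro ⟨hy, hz⟩
      rcases fin2_cases i with rfl | rfl
      · -- i = 0 : x = ν
        rw [mem_pairSet, if_pos rfl, mem_KI] at hy
        push_neg at hy
        obtain ⟨hr, ht⟩ := hy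
        by_cases hx : x.1.1 = n
        · left
          have htagne : x.1.2 ≠ b := by
            intro hc
            apply ht
            have h0 : x.1 = (x.1.1, x.1.2) := rfl
            rw [h0, hx, hc]
          have htag : x.1.2 = !b := by
            cases b <;> cases hb : x.1.2 <;> simp_all
          rw [Prod.mk.injEq]
          refine ⟨rfl, kext ?_⟩
          rw [Prod.ext_iff, hν, mid_fst]
          exact ⟨hx, htag⟩
        · exfalso
          have hlt : ((0:Fin 2), ν) < ((0:Fin 2), x) := by
            rw [lt_iff_le_and_ne]
            constructor
            · rw [mem_down0]
              exact ⟨rfl, by rw [kle_iff]; exact Or.inr (show n < x.1.1 by omega)⟩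
            · intro hc
              rw [Prod.mk.injEq] at hc
              have := congrArg (fun z => z.1.1) hc.2
              simp [hν] at this
              omega
          have hmem := hz _ hlt
          rw [mem_pairSet, if_pos rfl, mem_KI] at hmem
          rcases hmem with h | h
          · have : ν.1.1 = n := rfl
            omega
          · rw [hν, mid_fst, Prod.mk.injEq] at h
            cases b <;> simp_all
      · -- i = 1 : x = e
        right
        rw [mem_pairSet, if_neg (by decide), mem_KL] at hy
        push_neg at hy
        by_cases hx : x.1.1 = k
        · rw [Prod.mk.injEq]
          refine ⟨rfl, kext ?_⟩
          rw [Prod.ext_iff, he, elt_fst]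
          exact ⟨hx, ktag (by omega)⟩
        · exfalso
          have hlt : ((1:Fin 2), e) < ((1:Fin 2), x) := by
            rw [lt_iff_le_and_ne]
            constructor
            · rw [mem_down1, kle_iff]
              exact Or.inr (show k < x.1.1 by omega)
            · intro hc
              rw [Prod.mk.injEq] at hc
              have := congrArg (fun z => z.1.1) hc.2
              simp [he] at this
              omega
          have hmem := hz _ hlt
          rw [mem_pairSet, if_neg (by decide), mem_KL] at hmem
          have : e.1.1 = k := rfl
          omega
    · rintro (hM | hM) <;> rw [Prod.mk.injEq] at hM <;> obtain ⟨rfl, rfl⟩ := hM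
      · -- y = (0, ν)
        refine ⟨?_, ?_⟩
        · rw [mem_pairSet, if_pos rfl, mem_KI]
          push_neg
          refine ⟨le_of_eq rfl, ?_⟩
          intro hc
          rw [hν] at hc
          rw [Prod.mk.injEq] at hc
          cases b <;> simp_all
        · rintro ⟨j, w⟩ hlt
          rw [lt_iff_le_and_ne] at hlt
          obtain ⟨hle, hne⟩ := hlt
          rw [mem_down0] at hle
          obtain ⟨rfl, hw⟩ := hle
          rw [le_mid, mem_KI] at hw
          rw [mem_pairSet, if_pos rfl, mem_KI]
          rcases hw with h | h
          · exact Or.inl h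
          · exact absurd (by rw [Prod.mk.injEq]; exact ⟨rfl, kext (by rw [h, hν, mid_fst])⟩) hne
      · -- y = (1, e)
        refine ⟨?_, ?_⟩
        · rw [mem_pairSet, if_neg (by decide), mem_KL]
          have : e.1.1 = k := rfl
          omega
        · rintro ⟨j, w⟩ hlt
          rw [lt_iff_le_and_ne] at hlt
          obtain ⟨hle, hne⟩ := hlt
          rw [mem_down1] at hle
          rw [le_elt hkn, mem_KL] at hle
          rcases fin2_cases j with rfl | rfl
          · rw [mem_pairSet, if_pos rfl, mem_KI]
            exact Or.inl (by omega)
          · rw [mem_pairSet, if_neg (by decide), mem_KL]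
            have hwe : w ≠ e := by
              intro hc
              exact hne (by rw [hc])
            have : w.1.1 ≠ k := by
              intro hc
              apply hwe
              apply kext
              rw [Prod.ext_iff, he, elt_fst]
              exact ⟨hc, ktag (by omega)⟩
            omega


lemma T3 (hn : 2 ≤ n) (b : Bool) :
    XRev (pairSet (KI n b) (KL n (n-1))) = pairSet (KL n n) (KI n b) := by
  have h1n : (1:ℕ) ≤ n := by omega
  set μ := mid n h1n b with hμ
  set ν := mid n h1n (!b) with hν
  have hμ1 : μ.1 = (n, b) := rfl
  have hν1 : ν.1 = (n, !b) := rfl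
  rw [xrev_eq_of_min (M := {((0:Fin 2), ν), ((1:Fin 2), μ)})]
  · ext ⟨i, x⟩
    simp only [Set.mem_setOf_eq, mem_pair_min, exists_eq_or_imp, exists_eq_left,
      mem_down0, mem_down1, mem_pairSet]
    rcases fin2_cases i with rfl | rfl
    · rw [if_pos rfl, le_mid, le_mid, mem_KL]
      constructor
      · rintro (⟨-, h⟩ | h) <;> rw [mem_KI] at h <;> rcases h with h | h
        · omega
        · have := congrArg Prod.fst h; simp at this; omega
        · omega
        · have := congrArg Prod.fst h; simp at this; omega
      · intro h
        rcases Nat.lt_or_ge x.1.1 n with h' | h'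
        · exact Or.inl ⟨rfl, Or.inl h'⟩
        · have hxn : x.1.1 = n := by omega
          have hx1 : x.1 = (n, x.1.2) := by rw [Prod.ext_iff]; exact ⟨hxn, rfl⟩
          by_cases hc : x.1.2 = b
          · right; rw [mem_KI]; right; rw [hx1, hc]
          · left; refine ⟨rfl, ?_⟩; rw [mem_KI]; right; rw [hx1]
            have hxb : x.1.2 = !b := by
              cases b <;> cases hb : x.1.2
              · exact absurd hb hc
              · rfl
              · rfl
              · exact absurd hb hc
            rw [hxb]
    · rw [if_neg (by decide), le_mid, le_mid]
      constructor
      · rintro (⟨h, -⟩ | h)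
        · exact absurd h (by decide)
        · exact h
      · intro h
        exact Or.inr h
  · rintro ⟨i, x⟩
    rw [minimal_compl_iff, mem_pair_min]
    constructor
    · rintro ⟨hy, hz⟩
      rcases fin2_cases i with rfl | rfl
      · -- i = 0 : x = ν
        rw [mem_pairSet, if_pos rfl, mem_KI] at hy
        push_neg at hy
        obtain ⟨hr, ht⟩ := hy
        by_cases hx : x.1.1 = n
        · left
          have htagne : x.1.2 ≠ b := by
            intro hc
            apply ht
            have h0 : x.1 = (x.1.1, x.1.2) := rfl
            rw [h0, hx, hc]
          have htag : x.1.2 = !b := by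
            cases b <;> cases hb : x.1.2 <;> simp_all
          rw [Prod.mk.injEq]
          refine ⟨rfl, kext ?_⟩
          rw [Prod.ext_iff, hν1]
          exact ⟨hx, htag⟩
        · exfalso
          have hlt : ((0:Fin 2), ν) < ((0:Fin 2), x) := by
            rw [lt_iff_le_and_ne]
            constructor
            · rw [mem_down0]
              exact ⟨rfl, by rw [kle_iff]; exact Or.inr (show n < x.1.1 by omega)⟩
            · intro hc
              rw [Prod.mk.injEq] at hc
              have := congrArg (fun z => z.1.1) hc.2
              simp [hν] at this
              omega
          have hmem := hz _ hlt
          rw [mem_pairSet, if_pos rfl, mem_KI] at hmem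
          rcases hmem with h | h
          · have : ν.1.1 = n := rfl
            omega
          · rw [hν1, Prod.mk.injEq] at h
            cases b <;> simp_all
      · -- i = 1 : x = μ
        rw [mem_pairSet, if_neg (by decide), mem_KL] at hy
        push_neg at hy
        by_cases hx : x = μ
        · right; rw [hx]
        · exfalso
          have hνx : ν ≤ x := by
            by_cases hr : x.1.1 = n
            · have htag : x.1.2 = !b := by
                have : x.1.2 ≠ b := by
                  intro hc
                  apply hx
                  apply kext
                  rw [Prod.ext_iff, hμ1]
                  exact ⟨hr, hc⟩
                cases b <;> simp_all
              rw [kle_iff]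
              left
              apply kext
              rw [hν1, Prod.ext_iff]
              exact ⟨hr.symm, htag.symm⟩
            · rw [kle_iff]
              exact Or.inr (show n < x.1.1 by omega)
          have hlt : ((0:Fin 2), ν) < ((1:Fin 2), x) := by
            rw [lt_iff_le_and_ne]
            refine ⟨by rw [Prod.mk_le_mk]; exact ⟨by rw [Fin.le_def]; omega, hνx⟩, ?_⟩
            intro hc
            rw [Prod.mk.injEq] at hc
            exact absurd hc.1 (by decide)
          have hmem := hz _ hlt
          rw [mem_pairSet, if_pos rfl, mem_KI] at hmem
          rcases hmem with h | h
          · have : ν.1.1 = n := rfl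
            omega
          · rw [hν1, Prod.mk.injEq] at h
            cases b <;> simp_all
    · rintro (hM | hM) <;> rw [Prod.mk.injEq] at hM <;> obtain ⟨rfl, rfl⟩ := hM
      · -- y = (0, ν)
        refine ⟨?_, ?_⟩
        · rw [mem_pairSet, if_pos rfl, mem_KI]
          push_neg
          refine ⟨le_of_eq rfl, ?_⟩
          intro hc
          rw [hν1] at hc
          rw [Prod.mk.injEq] at hc
          cases b <;> simp_all
        · rintro ⟨j, w⟩ hlt
          rw [lt_iff_le_and_ne] at hlt
          obtain ⟨hle, hne⟩ := hlt
          rw [mem_down0] at hle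
          obtain ⟨rfl, hw⟩ := hle
          rw [le_mid, mem_KI] at hw
          rw [mem_pairSet, if_pos rfl, mem_KI]
          rcases hw with h | h
          · exact Or.inl h
          · exact absurd (by rw [Prod.mk.injEq]; exact ⟨rfl, kext (by rw [h, hν1])⟩) hne
      · -- y = (1, μ)
        refine ⟨?_, ?_⟩
        · rw [mem_pairSet, if_neg (by decide), mem_KL]
          have : μ.1.1 = n := rfl
          omega
        · rintro ⟨j, w⟩ hlt
          rw [lt_iff_le_and_ne] at hlt
          obtain ⟨hle, hne⟩ := hlt
          rw [mem_down1, le_mid, mem_KI] at hle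
          rcases fin2_cases j with rfl | rfl
          · rw [mem_pairSet, if_pos rfl, mem_KI]
            exact hle
          · rw [mem_pairSet, if_neg (by decide), mem_KL]
            rcases hle with h | h
            · omega
            · exact absurd (by rw [Prod.mk.injEq]; exact ⟨rfl, kext (by rw [h, hμ1])⟩) hne

lemma T4 (hn : 2 ≤ n) (b : Bool) (m : ℕ) (hm1 : n ≤ m) (hm2 : m ≤ 2*n-2) :
    XRev (pairSet (KL n m) (KI n b)) = pairSet (KL n (m+1)) (KI n (!b)) := by
  have h1n : (1:ℕ) ≤ n := by omega
  have hmn : m + 1 ≠ n := by omega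
  set e := elt n (m+1) (by omega) (by omega) with he
  set ν := mid n h1n (!b) with hν
  have he1 : e.1 = (m+1, false) := rfl
  have hν1 : ν.1 = (n, !b) := rfl
  rw [xrev_eq_of_min (M := {((0:Fin 2), e), ((1:Fin 2), ν)})]
  · ext ⟨i, x⟩
    simp only [Set.mem_setOf_eq, mem_pair_min, exists_eq_or_imp, exists_eq_left,
      mem_down0, mem_down1, mem_pairSet]
    rcases fin2_cases i with rfl | rfl
    · rw [if_pos rfl, le_elt hmn, le_mid]
      constructor
      · rintro (⟨-, h⟩ | h)
        · exact h
        · rw [mem_KI] at h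
          rw [mem_KL]
          rcases h with h | h
          · omega
          · have := congrArg Prod.fst h; simp at this; omega
      · intro h
        exact Or.inl ⟨rfl, h⟩
    · rw [if_neg (by decide), le_mid]
      constructor
      · rintro (⟨h, -⟩ | h)
        · exact absurd h (by decide)
        · exact h
      · intro h
        exact Or.inr h
  · rintro ⟨i, x⟩
    rw [minimal_compl_iff, mem_pair_min]
    constructor
    · rintro ⟨hy, hz⟩
      rcases fin2_cases i with rfl | rfl
      · -- i = 0 : x = e
        left
        rw [mem_pairSet, if_pos rfl, mem_KL] at hy
        push_neg at hy
        by_cases hx : x.1.1 = m+1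
        · rw [Prod.mk.injEq]
          refine ⟨rfl, kext ?_⟩
          rw [Prod.ext_iff, he1]
          exact ⟨hx, ktag (by omega)⟩
        · exfalso
          have hlt : ((0:Fin 2), e) < ((0:Fin 2), x) := by
            rw [lt_iff_le_and_ne]
            constructor
            · rw [mem_down0]
              exact ⟨rfl, by rw [kle_iff]; exact Or.inr (show m+1 < x.1.1 by omega)⟩
            · intro hc
              rw [Prod.mk.injEq] at hc
              have := congrArg (fun z => z.1.1) hc.2
              simp [he] at this
              omega
          have hmem := hz _ hlt
          rw [mem_pairSet, if_pos rfl, mem_KL] at hmem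
          have : e.1.1 = m+1 := rfl
          omega
      · -- i = 1 : x = ν
        right
        rw [mem_pairSet, if_neg (by decide), mem_KI] at hy
        push_neg at hy
        obtain ⟨hr, ht⟩ := hy
        by_cases hx : x.1.1 = n
        · have htagne : x.1.2 ≠ b := by
            intro hc
            apply ht
            have h0 : x.1 = (x.1.1, x.1.2) := rfl
            rw [h0, hx, hc]
          have htag : x.1.2 = !b := by
            cases b <;> cases hb : x.1.2 <;> simp_all
          rw [Prod.mk.injEq]
          refine ⟨rfl, kext ?_⟩
          rw [Prod.ext_iff, hν1]
          exact ⟨hx, htag⟩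
        · exfalso
          have hlt : ((1:Fin 2), ν) < ((1:Fin 2), x) := by
            rw [lt_iff_le_and_ne]
            constructor
            · rw [mem_down1, kle_iff]
              exact Or.inr (show n < x.1.1 by omega)
            · intro hc
              rw [Prod.mk.injEq] at hc
              have := congrArg (fun z => z.1.1) hc.2
              simp [hν] at this
              omega
          have hmem := hz _ hlt
          rw [mem_pairSet, if_neg (by decide), mem_KI] at hmem
          rcases hmem with h | h
          · have : ν.1.1 = n := rfl
            omega
          · rw [hν1, Prod.mk.injEq] at h
            cases b <;> simp_all
    · rintro (hM | hM) <;> rw [Prod.mk.injEq] at hM <;> obtain ⟨rfl, rfl⟩ := hM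
      · -- y = (0, e)
        refine ⟨?_, ?_⟩
        · rw [mem_pairSet, if_pos rfl, mem_KL]
          have : e.1.1 = m+1 := rfl
          omega
        · rintro ⟨j, w⟩ hlt
          rw [lt_iff_le_and_ne] at hlt
          obtain ⟨hle, hne⟩ := hlt
          rw [mem_down0] at hle
          obtain ⟨rfl, hw⟩ := hle
          rw [le_elt hmn, mem_KL] at hw
          rw [mem_pairSet, if_pos rfl, mem_KL]
          have hwe : w ≠ e := by
            intro hc
            exact hne (by rw [hc])
          have : w.1.1 ≠ m+1 := by
            intro hc
            apply hwe
            apply kext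
            rw [Prod.ext_iff, he1]
            exact ⟨hc, ktag (by omega)⟩
          omega
      · -- y = (1, ν)
        refine ⟨?_, ?_⟩
        · rw [mem_pairSet, if_neg (by decide), mem_KI]
          push_neg
          refine ⟨le_of_eq rfl, ?_⟩
          intro hc
          rw [hν1, Prod.mk.injEq] at hc
          cases b <;> simp_all
        · rintro ⟨j, w⟩ hlt
          rw [lt_iff_le_and_ne] at hlt
          obtain ⟨hle, hne⟩ := hlt
          rw [mem_down1, le_mid, mem_KI] at hle
          rcases fin2_cases j with rfl | rfl
          · rw [mem_pairSet, if_pos rfl, mem_KL]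
            rcases hle with h | h
            · omega
            · have := congrArg Prod.fst h; simp at this; omega
          · rw [mem_pairSet, if_neg (by decide), mem_KI]
            rcases hle with h | h
            · exact Or.inl h
            · exact absurd (by rw [Prod.mk.injEq]; exact ⟨rfl, kext (by rw [h, hν1])⟩) hne

lemma T5 (hn : 2 ≤ n) (b : Bool) :
    XRev (pairSet (KL n (2*n-1)) (KI n b)) = pairSet (KI n (!b)) (KI n (!b)) := by
  have h1n : (1:ℕ) ≤ n := by omega
  set ν := mid n h1n (!b) with hν
  have hν1 : ν.1 = (n, !b) := rfl
  rw [xrev_eq_of_min (M := {((1:Fin 2), ν)})]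
  · ext ⟨i, x⟩
    simp only [Set.mem_setOf_eq, Set.mem_singleton_iff, exists_eq_left, mem_down1, mem_pairSet]
    rw [le_mid]
    rcases fin2_cases i with rfl | rfl
    · rw [if_pos rfl]
    · rw [if_neg (by decide)]
  · rintro ⟨i, x⟩
    rw [minimal_compl_iff, Set.mem_singleton_iff]
    constructor
    · rintro ⟨hy, hz⟩
      rcases fin2_cases i with rfl | rfl
      · exfalso
        rw [mem_pairSet, if_pos rfl, mem_KL] at hy
        have := (krank (x := x)).2
        omega
      · -- i = 1 : x = ν
        rw [mem_pairSet, if_neg (by decide), mem_KI] at hy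
        push_neg at hy
        obtain ⟨hr, ht⟩ := hy
        by_cases hx : x.1.1 = n
        · have htagne : x.1.2 ≠ b := by
            intro hc
            apply ht
            have h0 : x.1 = (x.1.1, x.1.2) := rfl
            rw [h0, hx, hc]
          have htag : x.1.2 = !b := by
            cases b <;> cases hb : x.1.2 <;> simp_all
          rw [Prod.mk.injEq]
          refine ⟨rfl, kext ?_⟩
          rw [Prod.ext_iff, hν1]
          exact ⟨hx, htag⟩
        · exfalso
          have hlt : ((1:Fin 2), ν) < ((1:Fin 2), x) := by
            rw [lt_iff_le_and_ne]
            constructor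
            · rw [mem_down1, kle_iff]
              exact Or.inr (show n < x.1.1 by omega)
            · intro hc
              rw [Prod.mk.injEq] at hc
              have := congrArg (fun z => z.1.1) hc.2
              simp [hν] at this
              omega
          have hmem := hz _ hlt
          rw [mem_pairSet, if_neg (by decide), mem_KI] at hmem
          rcases hmem with h | h
          · have : ν.1.1 = n := rfl
            omega
          · rw [hν1, Prod.mk.injEq] at h
            cases b <;> simp_all
    · intro hM
      rw [Prod.mk.injEq] at hM
      obtain ⟨rfl, rfl⟩ := hM
      refine ⟨?_, ?_⟩
      · rw [mem_pairSet, if_neg (by decide), mem_KI]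
        push_neg
        refine ⟨le_of_eq rfl, ?_⟩
        intro hc
        rw [hν1, Prod.mk.injEq] at hc
        cases b <;> simp_all
      · rintro ⟨j, w⟩ hlt
        rw [lt_iff_le_and_ne] at hlt
        obtain ⟨hle, hne⟩ := hlt
        rw [mem_down1, le_mid, mem_KI] at hle
        rcases fin2_cases j with rfl | rfl
        · rw [mem_pairSet, if_pos rfl, mem_KL]
          exact (krank (x := w)).2
        · rw [mem_pairSet, if_neg (by decide), mem_KI]
          rcases hle with h | h
          · exact Or.inl h
          · exact absurd (by rw [Prod.mk.injEq]; exact ⟨rfl, kext (by rw [h, hν1])⟩) hne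


instance KType.finite : Finite (KType n) := by
  apply Finite.of_injective
    (fun x : KType n => ((⟨x.1.1 - 1, by have h1 := x.2.1; have h2 := x.2.2.1; omega⟩ : Fin (2*n)), x.1.2))
  intro a b h
  rw [Prod.mk.injEq, Fin.mk.injEq] at h
  apply kext
  rw [Prod.ext_iff]
  have ha := a.2.1
  have hb := b.2.1
  exact ⟨by omega, h.2⟩

lemma ncard_pairSet {β : Type*} [PartialOrder β] [Finite β] (I1 I2 : Set β) :
    (pairSet I1 I2).ncard = I1.ncard + I2.ncard := by
  have hinj : ∀ c : Fin 2, Function.Injective (Prod.mk c : β → Fin 2 × β) := by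
    intro c a b h
    injection h
  have h : pairSet I1 I2 = (Prod.mk (0:Fin 2) '' I1) ∪ (Prod.mk (1:Fin 2) '' I2) := by
    ext ⟨i, x⟩
    rw [mem_pairSet]
    simp only [Set.mem_union, Set.mem_image]
    constructor
    · intro hx
      rcases fin2_cases i with rfl | rfl
      · rw [if_pos rfl] at hx
        exact Or.inl ⟨x, hx, rfl⟩
      · rw [if_neg (by decide)] at hx
        exact Or.inr ⟨x, hx, rfl⟩
    · rintro (⟨a, ha, heq⟩ | ⟨a, ha, heq⟩) <;> rw [Prod.mk.injEq] at heq <;>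
        obtain ⟨h1, rfl⟩ := heq
      · rw [← h1, if_pos rfl]
        exact ha
      · rw [← h1, if_neg (by decide)]
        exact ha
  rw [h, Set.ncard_union_eq, Set.ncard_image_of_injective _ (hinj 0),
    Set.ncard_image_of_injective _ (hinj 1)]
  rw [Set.disjoint_left]
  rintro p ⟨a, -, rfl⟩ ⟨c, -, hc⟩
  rw [Prod.mk.injEq] at hc
  exact absurd hc.1 (by decide)

lemma ncard_KI (hn : 1 ≤ n) (b : Bool) : (KI n b).ncard = n := by
  apply Set.ncard_eq_of_bijective
    (fun i hi => (⟨(i+1, if i+1 = n then b else false),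
      ⟨by omega, by omega, fun h => if_neg h⟩⟩ : KType n))
  · intro a ha
    replace ha := (mem_KI (n := n) (b := b)).1 ha
    have h1 := a.2.1
    have hrn : a.1.1 ≤ n := by
      rcases ha with h | h
      · omega
      · have := congrArg Prod.fst h; simp at this; omega
    refine ⟨a.1.1 - 1, by omega, kext ?_⟩
    rw [Prod.ext_iff]
    constructor
    · simp only []
      omega
    · simp only []
      by_cases hc : a.1.1 - 1 + 1 = n
      · rw [if_pos hc]
        have han : a.1.1 = n := by omega
        rcases ha with h | h
        · omega
        · have := congrArg Prod.snd h; simpa using this.symm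
      · rw [if_neg hc]
        exact (ktag (x := a) (by omega)).symm
  · intro i hi
    refine (mem_KI (n := n) (b := b)).2 ?_
    by_cases hc : i + 1 = n
    · right
      simp only []
      rw [if_pos hc, hc]
    · left
      simp only []
      omega
  · intro i j hi hj hij
    have := congrArg (fun z : KType n => z.1.1) hij
    simpa using this

lemma ncard_KL_lt (hn : 1 ≤ n) (j : ℕ) (hj : j ≤ n - 1) : (KL n j).ncard = j := by
  apply Set.ncard_eq_of_bijective
    (fun i hi => (⟨(i+1, false), ⟨by omega, by omega, fun _ => rfl⟩⟩ : KType n))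
  · intro a ha
    replace ha := (mem_KL (n := n) (j := j)).1 ha
    have h1 := a.2.1
    refine ⟨a.1.1 - 1, by omega, kext ?_⟩
    rw [Prod.ext_iff]
    refine ⟨by simp only []; omega, ?_⟩
    simp only []
    exact (ktag (x := a) (by omega)).symm
  · intro i hi
    refine (mem_KL (n := n) (j := j)).2 ?_
    simp only []
    omega
  · intro i j hi hj hij
    have := congrArg (fun z : KType n => z.1.1) hij
    simpa using this

lemma ncard_KL_ge (hn : 1 ≤ n) (j : ℕ) (hj1 : n ≤ j) (hj2 : j ≤ 2*n-1) :
    (KL n j).ncard = j + 1 := by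
  apply Set.ncard_eq_of_bijective
    (fun i hi => (⟨(if i = n then n else if i < n then i+1 else i,
        if i = n then true else false),
      ⟨by split_ifs <;> omega, by split_ifs <;> omega,
        by
          intro h
          apply if_neg
          intro hc
          exact h (by rw [if_pos hc])⟩⟩ : KType n))
  · intro a ha
    replace ha := (mem_KL (n := n) (j := j)).1 ha
    have h1 := a.2.1
    by_cases han : a.1 = (n, true)
    · refine ⟨n, by omega, kext ?_⟩
      rw [Prod.ext_iff]
      constructor
      · show (if n = n then n else if n < n then n+1 else n) = a.1.1
        rw [if_pos rfl]
        exact (congrArg Prod.fst han).symm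
      · show (if n = n then true else false) = a.1.2
        rw [if_pos rfl]
        exact (congrArg Prod.snd han).symm
    · have htag : a.1.2 = false := by
        by_cases hr : a.1.1 = n
        · cases hb : a.1.2
          · rfl
          · exfalso
            apply han
            rw [Prod.ext_iff]
            exact ⟨hr, hb⟩
        · exact ktag hr
      by_cases hr : a.1.1 ≤ n
      · refine ⟨a.1.1 - 1, by omega, kext ?_⟩
        have hne : a.1.1 - 1 ≠ n := by omega
        rw [Prod.ext_iff]
        constructor
        · show (if a.1.1 - 1 = n then n else if a.1.1 - 1 < n then a.1.1 - 1 + 1 else a.1.1 - 1)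
            = a.1.1
          rw [if_neg hne, if_pos (show a.1.1 - 1 < n by omega)]
          omega
        · show (if a.1.1 - 1 = n then true else false) = a.1.2
          rw [if_neg hne]
          exact htag.symm
      · refine ⟨a.1.1, by omega, kext ?_⟩
        have hne : a.1.1 ≠ n := by omega
        rw [Prod.ext_iff]
        constructor
        · show (if a.1.1 = n then n else if a.1.1 < n then a.1.1 + 1 else a.1.1) = a.1.1
          rw [if_neg hne, if_neg (show ¬ a.1.1 < n by omega)]
        · show (if a.1.1 = n then true else false) = a.1.2
          rw [if_neg hne]
          exact htag.symm
  · intro i hi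
    refine (mem_KL (n := n) (j := j)).2 ?_
    show (if i = n then n else if i < n then i+1 else i) ≤ j
    split_ifs <;> omega
  · intro i i' hi hi' hij
    have h1 := congrArg (fun z : KType n => z.1.1) hij
    have h2 := congrArg (fun z : KType n => z.1.2) hij
    simp only [] at h1 h2
    by_cases hc : i = n <;> by_cases hc' : i' = n
    · omega
    · rw [if_pos hc, if_neg hc'] at h2
      simp at h2
    · rw [if_neg hc, if_pos hc'] at h2
      simp at h2
    · rw [if_neg hc, if_neg hc'] at h1
      split_ifs at h1 <;> omega

def orbF (n k : ℕ) : Set (Fin 2 × KType n) :=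
  if k = 0 then pairSet (KI n false) (KI n false)
  else if k ≤ n then pairSet (KI n (k % 2 == 1)) (KL n (k-1))
  else pairSet (KL n (k-1)) (KI n (k % 2 == 0))

lemma par1 (j : ℕ) : ((j+1) % 2 == 1) = !(j % 2 == 1) := by
  rcases Nat.mod_two_eq_zero_or_one j with h | h <;> simp [Nat.add_mod, h]

lemma par2 (j : ℕ) : ((j+1) % 2 == 0) = (j % 2 == 1) := by
  rcases Nat.mod_two_eq_zero_or_one j with h | h <;> simp [Nat.add_mod, h]

lemma par3 (j : ℕ) : ((j+1) % 2 == 0) = !(j % 2 == 0) := by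
  rcases Nat.mod_two_eq_zero_or_one j with h | h <;> simp [Nat.add_mod, h]

lemma step (hn : 2 ≤ n) (k : ℕ) (hk : k < 2*n) :
    XRev (orbF n k) = orbF n (k+1) := by
  by_cases h0 : k = 0
  · subst h0
    rw [show (0:ℕ)+1 = 1 from rfl, orbF, if_pos rfl, orbF, if_neg one_ne_zero,
      if_pos (by omega : (1:ℕ) ≤ n)]
    have h1 := T1 hn false
    have e1 : (1 % 2 == 1) = !false := rfl
    rw [e1]
    exact h1
  · by_cases h1 : k ≤ n - 1
    · rw [orbF, if_neg h0, if_pos (by omega), orbF, if_neg (by omega), if_pos (by omega)]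
      have h2 := T2 hn (k % 2 == 1) k (by omega) h1
      rw [par1 k]
      have e : k + 1 - 1 = k := by omega
      rw [e]
      exact h2
    · by_cases h2 : k = n
      · rw [orbF, if_neg h0, if_pos (le_of_eq h2), orbF, if_neg (by omega), if_neg (by omega)]
        rw [par2 k]
        have e : k + 1 - 1 = k := by omega
        rw [e, h2]
        exact T3 hn (n % 2 == 1)
      · rw [orbF, if_neg h0, if_neg (by omega), orbF, if_neg (by omega), if_neg (by omega)]
        have h4 := T4 hn (k % 2 == 0) (k-1) (by omega) (by omega)
        have e : k - 1 + 1 = k := by omega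
        rw [e] at h4
        rw [par3 k]
        have e2 : k + 1 - 1 = k := by omega
        rw [e2]
        exact h4

lemma step_wrap (hn : 2 ≤ n) : XRev (orbF n (2*n)) = orbF n 0 := by
  rw [orbF, if_neg (by omega), if_neg (by omega)]
  have e : (2*n % 2 == 0) = true := by simp [Nat.mul_mod_right]
  rw [e]
  have h5 := T5 hn true
  rw [orbF, if_pos rfl]
  exact h5

lemma iter_le (hn : 2 ≤ n) : ∀ k, k ≤ 2*n → XRev^[k] (orbF n 0) = orbF n k := by
  intro k
  induction k with
  | zero => intro _; rfl
  | succ k ih =>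
    intro hk
    rw [Function.iterate_succ_apply', ih (by omega), step hn k (by omega)]

lemma iter_period (hn : 2 ≤ n) : XRev^[2*n+1] (orbF n 0) = orbF n 0 := by
  rw [Function.iterate_succ_apply', iter_le hn (2*n) le_rfl, step_wrap hn]

lemma iter_mod (hn : 2 ≤ n) (k : ℕ) :
    XRev^[k] (orbF n 0) = orbF n (k % (2*n+1)) := by
  have key : ∀ q r, XRev^[(2*n+1)*q + r] (orbF n 0) = XRev^[r] (orbF n 0) := by
    intro q
    induction q with
    | zero => intro r; simp
    | succ q ih =>
      intro r
      have e : (2*n+1)*(q+1) + r = ((2*n+1)*q + r) + (2*n+1) := by ring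
      rw [e, Function.iterate_add_apply, iter_period hn, ih]
  have h1 : XRev^[k] (orbF n 0) = XRev^[k % (2*n+1)] (orbF n 0) := by
    conv_lhs => rw [← Nat.div_add_mod k (2*n+1)]
    exact key _ _
  have h2 : k % (2*n+1) ≤ 2*n := by
    have := Nat.mod_lt k (y := 2*n+1) (by omega)
    omega
  rw [h1, iter_le hn _ h2]

lemma orbit_eq (hn : 2 ≤ n) : XOrbit (orbF n 0) = orbF n '' (Set.Iio (2*n+1)) := by
  ext J
  constructor
  · rintro ⟨k, rfl⟩
    exact ⟨k % (2*n+1), Nat.mod_lt k (by omega), (iter_mod hn k).symm⟩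
  · rintro ⟨j, hj, rfl⟩
    refine ⟨j, ?_⟩
    rw [iter_mod hn j, Nat.mod_eq_of_lt hj]

lemma ncard_orbF (hn : 2 ≤ n) (k : ℕ) (hk : k ≤ 2*n) :
    (orbF n k).ncard = if k = 0 then 2*n else if k ≤ n then n + (k-1) else n + k := by
  have h1n : (1:ℕ) ≤ n := by omega
  by_cases h0 : k = 0
  · subst h0
    rw [orbF, if_pos rfl, if_pos rfl, ncard_pairSet, ncard_KI h1n]
    omega
  · by_cases h1 : k ≤ n
    · rw [orbF, if_neg h0, if_pos h1, if_neg h0, if_pos h1, ncard_pairSet, ncard_KI h1n,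
        ncard_KL_lt h1n (k-1) (by omega)]
    · rw [orbF, if_neg h0, if_neg h1, if_neg h0, if_neg h1, ncard_pairSet, ncard_KI h1n,
        ncard_KL_ge h1n (k-1) (by omega) (by omega)]
      omega

lemma orbF_injOn (hn : 2 ≤ n) : Set.InjOn (orbF n) (Set.Iio (2*n+1)) := by
  intro a ha b hb hab
  rw [Set.mem_Iio] at ha hb
  have h := congrArg Set.ncard hab
  rw [ncard_orbF hn a (by omega), ncard_orbF hn b (by omega)] at h
  split_ifs at h <;> omega

end S12

/-- For `P = [2] × K_{n-1}`, the `𝔛`-orbit of the lower set `(I_n, I_n)` has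
exactly `2n+1` elements, `𝔛^[2n+1] (I_n, I_n) = (I_n, I_n)`, and `(I_n, I_n)`
is the unique lower set of cardinality `2n` in that orbit. -/
theorem stmt12 (n : ℕ) (hn : 2 ≤ n) :
    (XOrbit (pairSet (KIn n) (KIn n))).ncard = 2 * n + 1 ∧
      XRev^[2 * n + 1] (pairSet (KIn n) (KIn n)) = pairSet (KIn n) (KIn n) ∧
      ∀ J ∈ XOrbit (pairSet (KIn n) (KIn n)),
        (J.ncard = 2 * n ↔ J = pairSet (KIn n) (KIn n)) := by
  have hJ0 : pairSet (KIn n) (KIn n) = S12.orbF n 0 := by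
    rw [S12.orbF, if_pos rfl, S12.KIn_eq]
  rw [hJ0]
  refine ⟨?_, ?_, ?_⟩
  · rw [S12.orbit_eq hn, Set.ncard_image_of_injOn (S12.orbF_injOn hn),
      ← Finset.coe_range, Set.ncard_coe_finset, Finset.card_range]
  · exact S12.iter_period hn
  · intro J hJ
    rw [S12.orbit_eq hn] at hJ
    obtain ⟨j, hj, rfl⟩ := hJ
    rw [Set.mem_Iio] at hj
    constructor
    · intro hc
      rw [S12.ncard_orbF hn j (by omega)] at hc
      have hj0 : j = 0 := by
        split_ifs at hc <;> omega
      rw [hj0]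
    · intro hc
      have hj0 : j = 0 := S12.orbF_injOn hn (Set.mem_Iio.mpr hj) (Set.mem_Iio.mpr (by omega)) hc
      rw [hj0, S12.ncard_orbF hn 0 (by omega), if_pos rfl]
end

section
/- Let n be odd with n ≥ 3, and let P = [n−1] ⊔ [n−1] be the disjoint union of two (n−1)-element chains. Then every orbit of the reverse operator 𝔛 on the lower sets of P contains exactly one lower set of cardinality n−1. -/
open Sum


/-- initial segment of `Fin m` of length `a`. -/
def Seg (m a : ℕ) : Set (Fin m) := {i | i.val < a}

lemma seg_ncard (m a : ℕ) (h : a ≤ m) : (Seg m a).ncard = a := by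
  have : Seg m a = (Fin.castLE h) '' Set.univ := by
    ext x
    constructor
    · intro hx
      exact ⟨⟨x.val, hx⟩, trivial, by ext; rfl⟩
    · rintro ⟨i, -, rfl⟩
      exact i.isLt
  rw [this, Set.ncard_image_of_injective _ (Fin.castLE_injective h), Set.ncard_univ,
    Nat.card_eq_fintype_card, Fintype.card_fin]

lemma lowerSet_eq_seg {m : ℕ} (S : Set (Fin m)) (hS : IsLowerSet S) :
    S = Seg m S.ncard ∧ S.ncard ≤ m := by
  have hle : S.ncard ≤ m := by
    have := Set.ncard_le_ncard (Set.subset_univ S) (Set.finite_univ)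
    simpa [Set.ncard_univ] using this
  refine ⟨?_, hle⟩
  ext i
  constructor
  · intro hi
    have hsub : Seg m (i.val + 1) ⊆ S := by
      intro j hj
      exact hS (show j ≤ i from Nat.lt_succ_iff.mp hj) hi
    have := Set.ncard_le_ncard hsub (Set.toFinite S)
    rw [seg_ncard m _ i.isLt] at this
    exact this
  · intro hi
    have hi' : i.val < S.ncard := hi
    by_contra hni
    have hsub : S ⊆ Seg m i.val := by
      intro j hj
      by_contra hj2
      exact hni (hS (show i ≤ j from Nat.le_of_not_lt hj2) hj)
    have := Set.ncard_le_ncard hsub (Set.toFinite _)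
    rw [seg_ncard m _ (Nat.le_of_lt i.isLt)] at this
    omega

/-- The lower set of `Fin m ⊕ Fin m` given by initial segments of lengths `a`, `b`. -/
def LL (m a b : ℕ) : Set (Fin m ⊕ Fin m) :=
  {x | Sum.elim (fun i : Fin m => i.val < a) (fun i : Fin m => i.val < b) x}

lemma mem_LL_inl {m a b : ℕ} {i : Fin m} : inl i ∈ LL m a b ↔ i.val < a := Iff.rfl
lemma mem_LL_inr {m a b : ℕ} {i : Fin m} : inr i ∈ LL m a b ↔ i.val < b := Iff.rfl

lemma LL_ncard {m a b : ℕ} (ha : a ≤ m) (hb : b ≤ m) : (LL m a b).ncard = a + b := by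
  have hdecomp : LL m a b = inl '' (Seg m a) ∪ inr '' (Seg m b) := by
    ext x
    cases x with
    | inl i => simp [mem_LL_inl, Seg]
    | inr i => simp [mem_LL_inr, Seg]
  rw [hdecomp, Set.ncard_union_eq (by
      rw [Set.disjoint_left]; rintro x ⟨i, -, rfl⟩ ⟨j, -, h⟩; exact Sum.inl_ne_inr h.symm)
    (Set.toFinite _) (Set.toFinite _),
    Set.ncard_image_of_injective _ Sum.inl_injective,
    Set.ncard_image_of_injective _ Sum.inr_injective,
    seg_ncard m a ha, seg_ncard m b hb]

lemma lowerSet_decomp {m : ℕ} (I : Set (Fin m ⊕ Fin m)) (hI : IsLowerSet I) :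
    ∃ a b, a ≤ m ∧ b ≤ m ∧ I = LL m a b := by
  set S₁ : Set (Fin m) := {i | inl i ∈ I} with hS₁
  set S₂ : Set (Fin m) := {i | inr i ∈ I} with hS₂
  have h₁ : IsLowerSet S₁ := fun i j hij hj => hI (Sum.inl_le_inl_iff.mpr hij) hj
  have h₂ : IsLowerSet S₂ := fun i j hij hj => hI (Sum.inr_le_inr_iff.mpr hij) hj
  obtain ⟨he₁, hle₁⟩ := lowerSet_eq_seg S₁ h₁
  obtain ⟨he₂, hle₂⟩ := lowerSet_eq_seg S₂ h₂
  refine ⟨S₁.ncard, S₂.ncard, hle₁, hle₂, ?_⟩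
  ext x
  cases x with
  | inl i =>
    have : i ∈ S₁ ↔ i ∈ Seg m S₁.ncard := by rw [← he₁]
    exact this
  | inr i =>
    have : i ∈ S₂ ↔ i ∈ Seg m S₂.ncard := by rw [← he₂]
    exact this

/-- successor mod m+1, on {0,...,m}. -/
def cyc (m a : ℕ) : ℕ := if a < m then a + 1 else 0

lemma minimal_LL {m a b : ℕ} (ha : a ≤ m) (hb : b ≤ m) (y : Fin m ⊕ Fin m) :
    Minimal (fun z => z ∈ (LL m a b)ᶜ) y ↔
      (∃ h : a < m, y = inl ⟨a, h⟩) ∨ (∃ h : b < m, y = inr ⟨b, h⟩) := by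
  constructor
  · rintro ⟨hy, hmin⟩
    cases y with
    | inl i =>
      have hai : a ≤ i.val := Nat.le_of_not_lt hy
      have ham : a < m := lt_of_le_of_lt hai i.isLt
      left
      refine ⟨ham, ?_⟩
      have : (inl ⟨a, ham⟩ : Fin m ⊕ Fin m) ≤ inl i := by
        simpa [Fin.le_def] using hai
      have := hmin (show (inl ⟨a, ham⟩ : Fin m ⊕ Fin m) ∈ (LL m a b)ᶜ from by
        simp [mem_LL_inl]) this
      have : i.val ≤ a := by simpa [Fin.le_def] using this
      have : i = ⟨a, ham⟩ := Fin.ext (le_antisymm this hai)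
      rw [this]
    | inr i =>
      have hbi : b ≤ i.val := Nat.le_of_not_lt hy
      have hbm : b < m := lt_of_le_of_lt hbi i.isLt
      right
      refine ⟨hbm, ?_⟩
      have : (inr ⟨b, hbm⟩ : Fin m ⊕ Fin m) ≤ inr i := by
        simpa [Fin.le_def] using hbi
      have := hmin (show (inr ⟨b, hbm⟩ : Fin m ⊕ Fin m) ∈ (LL m a b)ᶜ from by
        simp [mem_LL_inr]) this
      have : i.val ≤ b := by simpa [Fin.le_def] using this
      have : i = ⟨b, hbm⟩ := Fin.ext (le_antisymm this hbi)
      rw [this]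
  · rintro (⟨h, rfl⟩ | ⟨h, rfl⟩)
    · refine ⟨by simp [mem_LL_inl], ?_⟩
      rintro (z | z) hz hle
      · have hz' : a ≤ z.val := Nat.le_of_not_lt hz
        have : z.val ≤ a := by simpa [Fin.le_def] using hle
        exact Sum.inl_le_inl_iff.mpr (by simp [Fin.le_def]; omega)
      · exact absurd hle Sum.not_inr_le_inl
    · refine ⟨by simp [mem_LL_inr], ?_⟩
      rintro (z | z) hz hle
      · exact absurd hle Sum.not_inl_le_inr
      · have hz' : b ≤ z.val := Nat.le_of_not_lt hz
        have : z.val ≤ b := by simpa [Fin.le_def] using hle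
        exact Sum.inr_le_inr_iff.mpr (by simp [Fin.le_def]; omega)

lemma XRev_LL {m a b : ℕ} (ha : a ≤ m) (hb : b ≤ m) :
    XRev (LL m a b) = LL m (cyc m a) (cyc m b) := by
  ext x
  simp only [XRev, Set.mem_setOf_eq]
  constructor
  · rintro ⟨y, hmin, hxy⟩
    rcases (minimal_LL ha hb y).mp hmin with ⟨h, rfl⟩ | ⟨h, rfl⟩
    · cases x with
      | inl j =>
        have : j.val ≤ a := by simpa [Fin.le_def] using hxy
        simp [mem_LL_inl, cyc, h]; omega
      | inr j => exact absurd hxy Sum.not_inr_le_inl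
    · cases x with
      | inl j => exact absurd hxy Sum.not_inl_le_inr
      | inr j =>
        have : j.val ≤ b := by simpa [Fin.le_def] using hxy
        simp [mem_LL_inr, cyc, h]; omega
  · intro hx
    cases x with
    | inl j =>
      have hj : j.val < cyc m a := hx
      have ham : a < m := by by_contra h; simp [cyc, h] at hj
      refine ⟨inl ⟨a, ham⟩, (minimal_LL ha hb _).mpr (Or.inl ⟨ham, rfl⟩), ?_⟩
      simp [cyc, ham] at hj
      simpa [Fin.le_def] using hj
    | inr j =>
      have hj : j.val < cyc m b := hx
      have hbm : b < m := by by_contra h; simp [cyc, h] at hj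
      refine ⟨inr ⟨b, hbm⟩, (minimal_LL ha hb _).mpr (Or.inr ⟨hbm, rfl⟩), ?_⟩
      simp [cyc, hbm] at hj
      simpa [Fin.le_def] using hj

lemma cyc_mod {m : ℕ} (a : ℕ) (ha : a ≤ m) : cyc m a = (a + 1) % (m + 1) := by
  unfold cyc; split
  · rw [Nat.mod_eq_of_lt (by omega)]
  · have : a = m := by omega
    rw [this, Nat.mod_self]

lemma XRev_iter_LL {m : ℕ} (k : ℕ) : ∀ a b, a ≤ m → b ≤ m →
    XRev^[k] (LL m a b) = LL m ((a + k) % (m + 1)) ((b + k) % (m + 1)) := by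
  induction k with
  | zero =>
    intro a b ha hb
    simp [Nat.mod_eq_of_lt (Nat.lt_succ_of_le ha), Nat.mod_eq_of_lt (Nat.lt_succ_of_le hb)]
  | succ k ih =>
    intro a b ha hb
    have ha' : cyc m a ≤ m := by unfold cyc; split <;> omega
    have hb' : cyc m b ≤ m := by unfold cyc; split <;> omega
    have e : ∀ c : ℕ, c ≤ m → (cyc m c + k) % (m + 1) = (c + (k + 1)) % (m + 1) := by
      intro c hc
      rw [cyc_mod c hc, Nat.mod_add_mod, show c + 1 + k = c + (k + 1) by omega]
    rw [Function.iterate_succ_apply, XRev_LL ha hb, ih _ _ ha' hb', e a ha, e b hb]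


/-- For odd `n ≥ 3` and `P = [n-1] ⊔ [n-1]` (the disjoint union of two
`(n-1)`-element chains, realized as `Fin (n-1) ⊕ Fin (n-1)`), every `𝔛`-orbit
on the lower sets of `P` contains exactly one lower set of cardinality `n-1`. -/
theorem stmt14 (n : ℕ) (hn : 3 ≤ n) (hodd : Odd n)
    (I : Set (Fin (n - 1) ⊕ Fin (n - 1))) (hI : IsLowerSet I) :
    ∃! J : Set (Fin (n - 1) ⊕ Fin (n - 1)), J ∈ XOrbit I ∧ J.ncard = n - 1 := by
  obtain ⟨a, b, ha, hb, rfl⟩ := lowerSet_decomp I hI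
  set m := n - 1 with hm
  have hm1 : m + 1 = n := by omega
  obtain ⟨t, ht⟩ := hodd
  have h2' : 2 * ((m + 2) / 2) = m + 2 := by omega
  set c := m + (a + b) * m with hc
  set k₀ := ((m + 2) / 2) * c with hk
  have h2 : 2 * k₀ = (m + 2) * c := by rw [hk, ← mul_assoc, h2']
  have h4 : a + b + 2 * k₀ = m + (a + b + c) * (m + 1) := by rw [h2, hc]; ring
  have key : (a + b + 2 * k₀) % (m + 1) = m := by
    rw [h4, Nat.add_mul_mod_self_right, Nat.mod_eq_of_lt (by omega)]
  have hxle : ∀ x k : ℕ, (x + k) % (m + 1) ≤ m :=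
    fun x k => Nat.lt_succ_iff.mp (Nat.mod_lt _ (Nat.succ_pos m))
  have cardk : ∀ k : ℕ,
      (XRev^[k] (LL m a b)).ncard = (a + k) % (m + 1) + (b + k) % (m + 1) := by
    intro k
    rw [XRev_iter_LL k a b ha hb, LL_ncard (hxle a k) (hxle b k)]
  have sum_iff : ∀ k : ℕ,
      (a + k) % (m + 1) + (b + k) % (m + 1) = m ↔ (a + b + 2 * k) % (m + 1) = m := by
    intro k
    have hsum : ((a + k) % (m + 1) + (b + k) % (m + 1)) % (m + 1)
        = (a + b + 2 * k) % (m + 1) := by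
      rw [← Nat.add_mod]
      congr 1
      ring
    constructor
    · intro h
      rw [← hsum, h, Nat.mod_eq_of_lt (by omega)]
    · intro h
      rw [← hsum] at h
      rcases Nat.lt_or_ge ((a + k) % (m + 1) + (b + k) % (m + 1)) (m + 1) with hlt | hge
      · rwa [Nat.mod_eq_of_lt hlt] at h
      · exfalso
        have h1 := hxle a k
        have h2 := hxle b k
        rw [Nat.mod_eq_sub_mod hge, Nat.mod_eq_of_lt (by omega)] at h
        omega
  refine ⟨XRev^[k₀] (LL m a b), ⟨⟨k₀, rfl⟩, ?_⟩, ?_⟩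
  · rw [cardk k₀]
    exact (sum_iff k₀).mpr key
  · rintro J ⟨⟨k, rfl⟩, hcard⟩
    rw [cardk k] at hcard
    have hk2 : (a + b + 2 * k) % (m + 1) = m := (sum_iff k).mp hcard
    have hmod : 2 * k ≡ 2 * k₀ [MOD m + 1] :=
      Nat.ModEq.add_left_cancel' (a + b) (by rw [Nat.ModEq, hk2, key])
    have hco : Nat.Coprime (m + 1) 2 := by
      rw [Nat.coprime_two_right, hm1]
      exact ⟨t, ht⟩
    have hkk : k % (m + 1) = k₀ % (m + 1) :=
      Nat.ModEq.cancel_left_of_coprime hco hmod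
    rw [XRev_iter_LL k a b ha hb, XRev_iter_LL k₀ a b ha hb,
      Nat.add_mod a k, Nat.add_mod a k₀, Nat.add_mod b k, Nat.add_mod b k₀, hkk]
end
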